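/- arXiv:2004.10259 — 4 statements merged into one kernel-verified Lean document; each statement's English description precedes it below -/
import Mathlib

section
/- Let X₁, X₂, …, Xₙ be independent real-valued random variables on a probability space (Ω, 𝔉, ℙ), each symmetric (X_k and −X_k have the same distribution), with partial sums S_k = X₁ + ⋯ + X_k. Then for every λ > 0, ℙ(max_{1 ≤ k ≤ n} |S_k| > λ) ≤ 2 ℙ(|S_n| > λ). -/
open MeasureTheory ProbabilityTheory

open scoped ENNReal


lemma levy_aux_sym_add {Ω : Type*} [MeasurableSpace Ω] (μ : Measure Ω)
    {Y Z : Ω → ℝ} (hY : Measurable Y) (hZ : Measurable Z)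
    (hind : IndepFun Y Z μ) [IsProbabilityMeasure μ]
    (hsY : μ.map Y = μ.map (fun ω => -Y ω))
    (hsZ : μ.map Z = μ.map (fun ω => -Z ω)) :
    μ.map (fun ω => Y ω + Z ω) = μ.map (fun ω => -(Y ω + Z ω)) := by
  have h1 : μ.map (fun ω => (Y ω, Z ω)) = (μ.map Y).prod (μ.map Z) :=
    (indepFun_iff_map_prod_eq_prod_map_map hY.aemeasurable hZ.aemeasurable).mp hind
  have hind' : IndepFun (fun ω => -Y ω) (fun ω => -Z ω) μ :=
    hind.comp measurable_neg measurable_neg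
  have h2 : μ.map (fun ω => (-Y ω, -Z ω)) = (μ.map (fun ω => -Y ω)).prod (μ.map (fun ω => -Z ω)) :=
    (indepFun_iff_map_prod_eq_prod_map_map hY.neg.aemeasurable hZ.neg.aemeasurable).mp hind'
  have hadd : Measurable (fun p : ℝ × ℝ => p.1 + p.2) := measurable_fst.add measurable_snd
  calc μ.map (fun ω => Y ω + Z ω)
      = (μ.map (fun ω => (Y ω, Z ω))).map (fun p : ℝ × ℝ => p.1 + p.2) := by
        rw [Measure.map_map hadd (hY.prodMk hZ)]; rfl
    _ = (μ.map (fun ω => (-Y ω, -Z ω))).map (fun p : ℝ × ℝ => p.1 + p.2) := by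
        rw [h1, h2, ← hsY, ← hsZ]
    _ = μ.map (fun ω => -(Y ω + Z ω)) := by
        rw [Measure.map_map (f := fun ω => (-Y ω, -Z ω)) hadd (hY.neg.prodMk hZ.neg)]
        congr 1; funext ω; simp [Function.comp]; ring

lemma levy_aux_sum_sym {Ω ι : Type*} [MeasurableSpace Ω] (μ : Measure Ω)
    [IsProbabilityMeasure μ] (g : ι → Ω → ℝ) (hg : ∀ i, Measurable (g i))
    (hind : iIndepFun g μ)
    (hsym : ∀ i, μ.map (g i) = μ.map (fun ω => -g i ω)) (s : Finset ι) :
    μ.map (fun ω => ∑ i ∈ s, g i ω) = μ.map (fun ω => -∑ i ∈ s, g i ω) := by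
  classical
  induction s using Finset.induction_on with
  | empty => simp
  | @insert a s ha ih =>
    have hsum : Measurable (fun ω => ∑ i ∈ s, g i ω) := by
      exact Finset.measurable_sum s fun i _ => hg i
    have hind2 : IndepFun (g a) (fun ω => ∑ i ∈ s, g i ω) μ := by
      have := (hind.indepFun_finsetSum_of_notMem hg ha).symm
      have he : (∑ j ∈ s, g j) = fun ω => ∑ j ∈ s, g j ω := by
        funext ω; simp [Finset.sum_apply]
      rwa [he] at this
    have := levy_aux_sym_add μ (hg a) hsum hind2 (hsym a) ih
    simp only [Finset.sum_insert ha]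
    exact this

lemma levy_aux_half {Ω : Type*} [MeasurableSpace Ω] (μ : Measure Ω)
    [IsProbabilityMeasure μ] {D : Ω → ℝ} (hD : Measurable D)
    (hs : μ.map D = μ.map (fun ω => -D ω)) :
    1 ≤ 2 * μ {ω | 0 ≤ D ω} ∧ 1 ≤ 2 * μ {ω | D ω ≤ 0} := by
  have key : ∀ t : Set ℝ, MeasurableSet t → μ (D ⁻¹' t) = μ ((fun ω => -D ω) ⁻¹' t) := by
    intro t ht
    rw [← Measure.map_apply hD ht, ← Measure.map_apply (f := fun ω => -D ω) hD.neg ht, hs]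
  constructor
  · have h1 : μ {ω | D ω < 0} ≤ μ {ω | 0 ≤ D ω} := by
      have h2 := key (Set.Iio 0) measurableSet_Iio
      have e1 : D ⁻¹' Set.Iio 0 = {ω | D ω < 0} := by ext ω; simp
      have e2 : (fun ω => -D ω) ⁻¹' Set.Iio 0 = {ω | 0 < D ω} := by ext ω; simp
      rw [e1, e2] at h2
      rw [h2]
      apply measure_mono; intro ω h
      simp only [Set.mem_setOf_eq] at h ⊢; linarith
    calc (1 : ℝ≥0∞) = μ Set.univ := (measure_univ).symm
      _ ≤ μ ({ω | D ω < 0} ∪ {ω | 0 ≤ D ω}) := by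
          apply measure_mono; intro ω _; by_cases h : D ω < 0
          · exact Or.inl h
          · exact Or.inr (le_of_not_gt h)
      _ ≤ μ {ω | D ω < 0} + μ {ω | 0 ≤ D ω} := measure_union_le _ _
      _ ≤ μ {ω | 0 ≤ D ω} + μ {ω | 0 ≤ D ω} := by exact add_le_add_left h1 _
      _ = 2 * μ {ω | 0 ≤ D ω} := (two_mul _).symm
  · have h1 : μ {ω | 0 < D ω} ≤ μ {ω | D ω ≤ 0} := by
      have h2 := key (Set.Ioi 0) measurableSet_Ioi
      have e1 : D ⁻¹' Set.Ioi 0 = {ω | 0 < D ω} := by ext ω; simp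
      have e2 : (fun ω => -D ω) ⁻¹' Set.Ioi 0 = {ω | D ω < 0} := by ext ω; simp
      rw [e1, e2] at h2
      rw [h2]
      apply measure_mono; intro ω h
      simp only [Set.mem_setOf_eq] at h ⊢; linarith
    calc (1 : ℝ≥0∞) = μ Set.univ := (measure_univ).symm
      _ ≤ μ ({ω | 0 < D ω} ∪ {ω | D ω ≤ 0}) := by
          apply measure_mono; intro ω _; by_cases h : 0 < D ω
          · exact Or.inl h
          · exact Or.inr (le_of_not_gt h)
      _ ≤ μ {ω | 0 < D ω} + μ {ω | D ω ≤ 0} := measure_union_le _ _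
      _ ≤ μ {ω | D ω ≤ 0} + μ {ω | D ω ≤ 0} := by exact add_le_add_left h1 _
      _ = 2 * μ {ω | D ω ≤ 0} := (two_mul _).symm



section
variable {Ω : Type*} [MeasurableSpace Ω]

lemma levy_aux_side (μ : Measure Ω) [IsProbabilityMeasure μ]
    (n : ℕ) (X : ℕ → Ω → ℝ)
    (hmeas : ∀ k, Measurable (X k))
    (hindep : iIndepFun (fun i : Fin n => X (i + 1)) μ)
    (hsym : ∀ k, 1 ≤ k → k ≤ n →
      Measure.map (X k) μ = Measure.map (fun ω => -X k ω) μ)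
    (S : ℕ → Ω → ℝ) (hS : ∀ k, S k = fun ω => ∑ i ∈ Finset.Icc 1 k, X i ω)
    (l : ℝ) (k : ℕ) (hk1 : 1 ≤ k) (hkn : k ≤ n) (ε : ℝ) (hε : ε = 1 ∨ ε = -1) :
    μ {ω | (∀ j ∈ Finset.Ico 1 k, |S j ω| ≤ l) ∧ l < ε * S k ω}
      ≤ 2 * μ ({ω | (∀ j ∈ Finset.Ico 1 k, |S j ω| ≤ l) ∧ l < ε * S k ω}
          ∩ {ω | 0 ≤ ε * (S n ω - S k ω)}) := by
  classical
  -- index sets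
  set Fk : Finset (Fin n) := Finset.univ.filter (fun i => (i : ℕ) < k) with hFk
  set Gk : Finset (Fin n) := Finset.univ.filter (fun i => ¬ (i : ℕ) < k) with hGk
  have hgmeas : ∀ i : Fin n, Measurable (X (i + 1)) := fun i => hmeas _
  have hgsym : ∀ i : Fin n, μ.map (X (i + 1)) = μ.map (fun ω => -X (i + 1) ω) :=
    fun i => hsym _ (Nat.succ_le_succ (Nat.zero_le _)) i.isLt
  -- sum conversions
  have hIcc : ∀ m, ∀ ω : Ω, (∑ i ∈ Finset.Icc 1 m, X i ω) = ∑ j ∈ Finset.range m, X (j + 1) ω := by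
    intro m ω
    induction m with
    | zero => simp
    | succ m ih => rw [Finset.sum_Icc_succ_top (by omega), ih, Finset.sum_range_succ]
  have hfil : ∀ m, m ≤ n → ∀ ω : Ω,
      (∑ i ∈ Finset.univ.filter (fun i : Fin n => (i : ℕ) < m), X (i + 1) ω)
        = ∑ j ∈ Finset.range m, X (j + 1) ω := by
    intro m hm ω
    rw [Finset.sum_filter]
    rw [Fin.sum_univ_eq_sum_range (fun j => if j < m then X (j + 1) ω else 0) n]
    rw [← Finset.sum_subset (Finset.range_subset_range.mpr hm)
        (fun j _ hj2 => by
          simp only [Finset.mem_range] at hj2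
          rw [if_neg]; omega)]
    refine Finset.sum_congr rfl fun j hj => ?_
    rw [if_pos]; simpa using hj
  have hSsum : ∀ m, m ≤ n → ∀ ω : Ω,
      S m ω = ∑ i ∈ Finset.univ.filter (fun i : Fin n => (i : ℕ) < m), X (i + 1) ω := by
    intro m hm ω
    rw [hS]
    exact (hIcc m ω).trans (hfil m hm ω).symm
  have huniv : Finset.univ.filter (fun i : Fin n => (i : ℕ) < n) = Finset.univ :=
    Finset.filter_true_of_mem (fun i _ => i.isLt)
  -- the tail sum D
  set D : Ω → ℝ := fun ω => ∑ i ∈ Gk, X (i + 1) ω with hDdef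
  have hD : ∀ ω, S n ω - S k ω = D ω := by
    intro ω
    have hsplit := Finset.sum_filter_add_sum_filter_not Finset.univ
      (fun i : Fin n => (i : ℕ) < k) (fun i => X (i + 1) ω)
    have hn' : S n ω = ∑ i : Fin n, X (i + 1) ω := by
      rw [hSsum n le_rfl ω, huniv]
    rw [hn', hSsum k hkn ω, hDdef]
    rw [← hsplit, hGk]
    ring
  have hDmeas : Measurable D := Finset.measurable_sum _ fun i _ => hmeas _
  have hDsym : μ.map D = μ.map (fun ω => -D ω) :=
    levy_aux_sum_sym μ (fun i : Fin n => X (i + 1)) hgmeas hindep hgsym Gk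
  -- independence of the two blocks
  have hdisj : Disjoint Fk Gk := by
    rw [hFk, hGk]
    exact Finset.disjoint_filter_filter_not Finset.univ Finset.univ _
  have hFG : IndepFun (fun ω (i : Fk) => X ((i : Fin n) + 1) ω)
      (fun ω (i : Gk) => X ((i : Fin n) + 1) ω) μ :=
    hindep.indepFun_finset Fk Gk hdisj hgmeas
  -- functions on the blocks
  set φ : ℕ → ((i : Fk) → ℝ) → ℝ :=
    fun j v => ∑ i ∈ Fk.attach, if ((i : Fin n) : ℕ) < j then v i else 0 with hφdef
  set ψ : ((i : Gk) → ℝ) → ℝ := fun v => ∑ i ∈ Gk.attach, v i with hψdef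
  have hφm : ∀ j, Measurable (φ j) := by
    intro j
    apply Finset.measurable_sum
    intro i _
    by_cases h : ((i : Fin n) : ℕ) < j
    · simpa [h] using measurable_pi_apply i
    · simp [h]
  have hψm : Measurable ψ := Finset.measurable_sum _ fun i _ => measurable_pi_apply i
  -- key pointwise identities
  have hφF : ∀ j, j ≤ k → ∀ ω : Ω,
      φ j (fun i : Fk => X ((i : Fin n) + 1) ω) = S j ω := by
    intro j hj ω
    rw [hφdef]
    simp only
    rw [Finset.sum_attach Fk (fun b : Fin n => if (b : ℕ) < j then X ((b : ℕ) + 1) ω else 0)]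
    rw [← Finset.sum_filter]
    rw [hFk, Finset.filter_filter]
    rw [hSsum j (le_trans hj hkn) ω]
    apply Finset.sum_congr _ (fun _ _ => rfl)
    apply Finset.filter_congr
    intro i _
    constructor
    · intro h; omega
    · intro h; exact ⟨by omega, h⟩
  have hψG : ∀ ω : Ω, ψ (fun i : Gk => X ((i : Fin n) + 1) ω) = D ω := by
    intro ω
    rw [hψdef, hDdef]
    simp only
    exact Finset.sum_attach Gk (fun b : Fin n => X ((b : ℕ) + 1) ω)
  -- the measurable sets on the blocks
  set sA : Set ((i : Fk) → ℝ) :=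
    {v | (∀ j ∈ Finset.Ico 1 k, |φ j v| ≤ l) ∧ l < ε * φ k v} with hsAdef
  set sD : Set ((i : Gk) → ℝ) := {v | 0 ≤ ε * ψ v} with hsDdef
  have msA : MeasurableSet sA := by
    rw [hsAdef]
    have : {v : (i : Fk) → ℝ | (∀ j ∈ Finset.Ico 1 k, |φ j v| ≤ l) ∧ l < ε * φ k v}
        = (⋂ j ∈ Finset.Ico 1 k, {v | |φ j v| ≤ l}) ∩ {v | l < ε * φ k v} := by
      ext v; simp [Set.mem_iInter]
    rw [this]
    refine MeasurableSet.inter ?_ ?_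
    · exact MeasurableSet.biInter (Finset.Ico 1 k : Finset ℕ).countable_toSet
        (fun j _ => measurableSet_le (hφm j).abs measurable_const)
    · exact measurableSet_lt measurable_const ((hφm k).const_mul ε)
  have msD : MeasurableSet sD := measurableSet_le measurable_const (hψm.const_mul ε)
  -- identify preimages
  have hApre : (fun ω (i : Fk) => X ((i : Fin n) + 1) ω) ⁻¹' sA
      = {ω | (∀ j ∈ Finset.Ico 1 k, |S j ω| ≤ l) ∧ l < ε * S k ω} := by
    ext ω
    simp only [Set.mem_preimage, hsAdef, Set.mem_setOf_eq]
    constructor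
    · rintro ⟨h1, h2⟩
      refine ⟨fun j hj => ?_, ?_⟩
      · have := h1 j hj
        rwa [hφF j (le_of_lt (Finset.mem_Ico.mp hj).2) ω] at this
      · rwa [hφF k le_rfl ω] at h2
    · rintro ⟨h1, h2⟩
      refine ⟨fun j hj => ?_, ?_⟩
      · rw [hφF j (le_of_lt (Finset.mem_Ico.mp hj).2) ω]
        exact h1 j hj
      · rwa [hφF k le_rfl ω]
  have hDpre : (fun ω (i : Gk) => X ((i : Fin n) + 1) ω) ⁻¹' sD
      = {ω | 0 ≤ ε * (S n ω - S k ω)} := by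
    ext ω
    simp only [Set.mem_preimage, hsDdef, Set.mem_setOf_eq]
    rw [hψG ω, hD ω]
  -- independence of the two events
  have hmul := (indepFun_iff_measure_inter_preimage_eq_mul.mp hFG) sA sD msA msD
  rw [hApre, hDpre] at hmul
  -- the half bound
  have hhalf : (1 : ℝ≥0∞) ≤ 2 * μ {ω | 0 ≤ ε * (S n ω - S k ω)} := by
    rcases hε with h | h
    · subst h
      have : {ω : Ω | 0 ≤ 1 * (S n ω - S k ω)} = {ω | 0 ≤ D ω} := by
        ext ω
        simp only [Set.mem_setOf_eq, ← hD ω]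
        constructor <;> intro h' <;> linarith
      rw [this]
      exact (levy_aux_half μ hDmeas hDsym).1
    · subst h
      have : {ω : Ω | 0 ≤ (-1 : ℝ) * (S n ω - S k ω)} = {ω | D ω ≤ 0} := by
        ext ω
        simp only [Set.mem_setOf_eq, ← hD ω]
        constructor <;> intro h' <;> linarith
      rw [this]
      exact (levy_aux_half μ hDmeas hDsym).2
  calc μ {ω | (∀ j ∈ Finset.Ico 1 k, |S j ω| ≤ l) ∧ l < ε * S k ω}
      = μ {ω | (∀ j ∈ Finset.Ico 1 k, |S j ω| ≤ l) ∧ l < ε * S k ω} * 1 := (mul_one _).symm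
    _ ≤ μ {ω | (∀ j ∈ Finset.Ico 1 k, |S j ω| ≤ l) ∧ l < ε * S k ω}
        * (2 * μ {ω | 0 ≤ ε * (S n ω - S k ω)}) := mul_le_mul_right hhalf _
    _ = 2 * (μ {ω | (∀ j ∈ Finset.Ico 1 k, |S j ω| ≤ l) ∧ l < ε * S k ω}
        * μ {ω | 0 ≤ ε * (S n ω - S k ω)}) := by ring
    _ = 2 * μ ({ω | (∀ j ∈ Finset.Ico 1 k, |S j ω| ≤ l) ∧ l < ε * S k ω}
        ∩ {ω | 0 ≤ ε * (S n ω - S k ω)}) := by rw [hmul]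

end

/-- **Classical Lévy inequality, absolute-value form.**  If `X 1, …, X n` are
independent symmetric real random variables with partial sums `S k`, then for `λ > 0`,
`ℙ(max_{1 ≤ k ≤ n} |S k| > λ) ≤ 2 ℙ(|S n| > λ)`. -/
theorem classical_levy_inequality_abs {Ω : Type*} [MeasurableSpace Ω]
    (μ : Measure Ω) [IsProbabilityMeasure μ]
    (n : ℕ) (hn : 1 ≤ n) (X : ℕ → Ω → ℝ)
    (hmeas : ∀ k, Measurable (X k))
    (hindep : iIndepFun (fun i : Fin n => X (i + 1)) μ)
    (hsym : ∀ k, 1 ≤ k → k ≤ n →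
      Measure.map (X k) μ = Measure.map (fun ω => -X k ω) μ)
    (S : ℕ → Ω → ℝ) (hS : ∀ k, S k = fun ω => ∑ i ∈ Finset.Icc 1 k, X i ω)
    (l : ℝ) (hl : 0 < l) :
    μ {ω | ∃ k, 1 ≤ k ∧ k ≤ n ∧ l < |S k ω|} ≤ 2 * μ {ω | l < |S n ω|} := by
  classical
  have hSmeas : ∀ m, Measurable (S m) := by
    intro m; rw [hS]; exact Finset.measurable_sum _ fun i _ => hmeas i
  set T : Set Ω := {ω | l < |S n ω|} with hT
  set C : ℕ → Set Ω :=
    fun k => {ω | (∀ j ∈ Finset.Ico 1 k, |S j ω| ≤ l) ∧ l < |S k ω|} with hC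
  set A : ℕ → Set Ω :=
    fun k => {ω | (∀ j ∈ Finset.Ico 1 k, |S j ω| ≤ l) ∧ l < 1 * S k ω} with hA
  set B : ℕ → Set Ω :=
    fun k => {ω | (∀ j ∈ Finset.Ico 1 k, |S j ω| ≤ l) ∧ l < (-1 : ℝ) * S k ω} with hB
  set P : ℕ → Set Ω := fun k => {ω | 0 ≤ 1 * (S n ω - S k ω)} with hP
  set N : ℕ → Set Ω := fun k => {ω | 0 ≤ (-1 : ℝ) * (S n ω - S k ω)} with hN
  -- measurability of events
  have hmF : ∀ k, MeasurableSet {ω | ∀ j ∈ Finset.Ico 1 k, |S j ω| ≤ l} := by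
    intro k
    have : {ω | ∀ j ∈ Finset.Ico 1 k, |S j ω| ≤ l}
        = ⋂ j ∈ Finset.Ico 1 k, {ω | |S j ω| ≤ l} := by
      ext ω; simp
    rw [this]
    exact MeasurableSet.biInter (Finset.Ico 1 k : Finset ℕ).countable_toSet
      (fun j _ => measurableSet_le (hSmeas j).abs measurable_const)
  have hmA : ∀ k, MeasurableSet (A k) := fun k =>
    (hmF k).inter (measurableSet_lt measurable_const ((hSmeas k).const_mul 1))
  have hmB : ∀ k, MeasurableSet (B k) := fun k =>
    (hmF k).inter (measurableSet_lt measurable_const ((hSmeas k).const_mul (-1)))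
  have hmC : ∀ k, MeasurableSet (C k) := fun k =>
    (hmF k).inter (measurableSet_lt measurable_const (hSmeas k).abs)
  have hmP : ∀ k, MeasurableSet (P k) := fun k =>
    measurableSet_le measurable_const (((hSmeas n).sub (hSmeas k)).const_mul 1)
  have hmN : ∀ k, MeasurableSet (N k) := fun k =>
    measurableSet_le measurable_const (((hSmeas n).sub (hSmeas k)).const_mul (-1))
  have hmT : MeasurableSet T := measurableSet_lt measurable_const (hSmeas n).abs
  -- the per-index bound
  have hCk : ∀ k, 1 ≤ k → k ≤ n → μ (C k) ≤ 2 * μ (C k ∩ T) := by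
    intro k hk1 hkn
    have hAB : C k = A k ∪ B k := by
      ext ω
      simp only [hC, hA, hB, Set.mem_setOf_eq, Set.mem_union, one_mul, neg_one_mul]
      rw [lt_abs]
      tauto
    have hdAB : Disjoint (A k) (B k) := by
      rw [Set.disjoint_left]
      intro ω h1 h2
      simp only [hA, hB, Set.mem_setOf_eq, one_mul, neg_one_mul] at h1 h2
      linarith [h1.2, h2.2]
    have hsub1 : A k ∩ P k ⊆ C k ∩ T := by
      rintro ω ⟨⟨h1, h2⟩, h3⟩
      simp only [hP, Set.mem_setOf_eq, one_mul] at h2 h3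
      refine ⟨⟨h1, lt_of_lt_of_le h2 (le_abs_self _)⟩, ?_⟩
      have : l < S n ω := by linarith
      exact lt_of_lt_of_le this (le_abs_self _)
    have hsub2 : B k ∩ N k ⊆ C k ∩ T := by
      rintro ω ⟨⟨h1, h2⟩, h3⟩
      simp only [hN, Set.mem_setOf_eq, neg_one_mul] at h2 h3
      refine ⟨⟨h1, lt_of_lt_of_le (by linarith : l < -S k ω) (neg_le_abs _)⟩, ?_⟩
      have : l < -S n ω := by linarith
      exact lt_of_lt_of_le this (neg_le_abs _)
    have hdAPBN : Disjoint (A k ∩ P k) (B k ∩ N k) :=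
      hdAB.mono Set.inter_subset_left Set.inter_subset_left
    have hunion : μ (A k ∩ P k) + μ (B k ∩ N k) ≤ μ (C k ∩ T) := by
      rw [← measure_union hdAPBN ((hmB k).inter (hmN k))]
      exact measure_mono (Set.union_subset hsub1 hsub2)
    have hAbound := levy_aux_side μ n X hmeas hindep hsym S hS l k hk1 hkn 1 (Or.inl rfl)
    have hBbound := levy_aux_side μ n X hmeas hindep hsym S hS l k hk1 hkn (-1) (Or.inr rfl)
    calc μ (C k) = μ (A k ∪ B k) := by rw [hAB]
      _ = μ (A k) + μ (B k) := measure_union hdAB (hmB k)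
      _ ≤ 2 * μ (A k ∩ P k) + 2 * μ (B k ∩ N k) := add_le_add hAbound hBbound
      _ = 2 * (μ (A k ∩ P k) + μ (B k ∩ N k)) := by ring
      _ ≤ 2 * μ (C k ∩ T) := mul_le_mul_right hunion 2
  -- first-entrance decomposition
  have hEsub : {ω | ∃ k, 1 ≤ k ∧ k ≤ n ∧ l < |S k ω|} ⊆ ⋃ k ∈ Finset.Icc 1 n, C k := by
    intro ω hω
    have hω' : ∃ k, 1 ≤ k ∧ k ≤ n ∧ l < |S k ω| := hω
    set k₀ := Nat.find hω' with hk₀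
    obtain ⟨h1, h2, h3⟩ := Nat.find_spec hω'
    refine Set.mem_biUnion (Finset.mem_coe.mpr (Finset.mem_Icc.mpr ⟨h1, h2⟩)) ?_
    refine ⟨fun j hj => ?_, h3⟩
    rw [Finset.mem_Ico] at hj
    by_contra hcon
    push_neg at hcon
    exact Nat.find_min hω' hj.2 ⟨hj.1, by omega, hcon⟩
  have hdisjC : (↑(Finset.Icc 1 n) : Set ℕ).PairwiseDisjoint (fun k => C k ∩ T) := by
    intro a ha b hb hab
    simp only [Finset.coe_Icc, Set.mem_Icc] at ha hb
    rw [Function.onFun, Set.disjoint_left]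
    rcases Nat.lt_or_ge a b with h | h
    · rintro ω ⟨hωa, _⟩ ⟨hωb, _⟩
      have := hωb.1 a (Finset.mem_Ico.mpr ⟨ha.1, h⟩)
      exact absurd this (not_le.mpr hωa.2)
    · have h' : b < a := by omega
      rintro ω ⟨hωa, _⟩ ⟨hωb, _⟩
      have := hωa.1 b (Finset.mem_Ico.mpr ⟨hb.1, h'⟩)
      exact absurd this (not_le.mpr hωb.2)
  calc μ {ω | ∃ k, 1 ≤ k ∧ k ≤ n ∧ l < |S k ω|}
      ≤ μ (⋃ k ∈ Finset.Icc 1 n, C k) := measure_mono hEsub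
    _ ≤ ∑ k ∈ Finset.Icc 1 n, μ (C k) := measure_biUnion_finset_le _ _
    _ ≤ ∑ k ∈ Finset.Icc 1 n, 2 * μ (C k ∩ T) := by
        refine Finset.sum_le_sum fun k hk => ?_
        rw [Finset.mem_Icc] at hk
        exact hCk k hk.1 hk.2
    _ = 2 * ∑ k ∈ Finset.Icc 1 n, μ (C k ∩ T) := by rw [Finset.mul_sum]
    _ = 2 * μ (⋃ k ∈ Finset.Icc 1 n, C k ∩ T) := by
        rw [measure_biUnion_finset hdisjC (fun k _ => (hmC k).inter hmT)]
    _ ≤ 2 * μ T := by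
        refine mul_le_mul_right (measure_mono ?_) 2
        exact Set.iUnion₂_subset fun k _ => Set.inter_subset_right
end

section
/- Let X₁, X₂, …, Xₙ be independent real-valued random variables on a probability space (Ω, 𝔉, ℙ) with partial sums S_k = X₁ + ⋯ + X_k. Then for every λ > 0 and every 0 < α < 1, ℙ(max_{1 ≤ k ≤ n} S_k > λ) · min_{1 ≤ k ≤ n} ℙ(S_n − S_k ≥ −(1 − α)λ) ≤ ℙ(S_n > αλ). -/
open MeasureTheory ProbabilityTheory

private lemma sum_fin_image {n : ℕ} (T : Finset (Fin n)) (g : ℕ → ℝ) (I : Finset ℕ)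
    (hI : ∀ m, m ∈ I ↔ ∃ i ∈ T, (i : ℕ) + 1 = m) :
    ∑ i ∈ T, g ((i : ℕ) + 1) = ∑ m ∈ I, g m := by
  have hinj : ∀ x ∈ T, ∀ y ∈ T, ((x : ℕ) + 1 = (y : ℕ) + 1) → x = y := by
    intro x _ y _ h; exact Fin.ext (by omega)
  have hIimg : I = T.image (fun i : Fin n => (i : ℕ) + 1) := by
    ext m; simp [hI, Finset.mem_image]
  rw [hIimg, Finset.sum_image hinj]

private lemma indep_aux {Ω : Type*} [MeasurableSpace Ω] (μ : Measure Ω)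
    [IsProbabilityMeasure μ]
    (n k : ℕ) (hk1 : 1 ≤ k) (hkn : k ≤ n) (X : ℕ → Ω → ℝ)
    (hmeas : ∀ m, Measurable (X m))
    (hindep : iIndepFun (fun i : Fin n => X (i + 1)) μ) :
    IndepFun (fun ω => fun j : Fin k => ∑ i ∈ Finset.Icc 1 ((j : ℕ) + 1), X i ω)
      (fun ω => ∑ i ∈ Finset.Icc (k + 1) n, X i ω) μ := by
  classical
  set T₁ : Finset (Fin n) := Finset.univ.filter (fun i => (i : ℕ) < k) with hT₁
  set T₂ : Finset (Fin n) := Finset.univ.filter (fun i => k ≤ (i : ℕ)) with hT₂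
  have hdisj : Disjoint T₁ T₂ := by
    rw [Finset.disjoint_left]
    intro i h1 h2
    simp only [hT₁, hT₂, Finset.mem_filter, Finset.mem_univ, true_and] at h1 h2
    omega
  have h := hindep.indepFun_finset T₁ T₂ hdisj (fun i => hmeas _)
  set φ : (T₁ → ℝ) → (Fin k → ℝ) :=
    fun x j => ∑ i ∈ Finset.univ.filter (fun i : T₁ => ((i : Fin n) : ℕ) ≤ (j : ℕ)), x i
    with hφdef
  set ψ : (T₂ → ℝ) → ℝ := fun x => ∑ i, x i with hψdef
  have hφ : Measurable φ := by
    apply measurable_pi_lambda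
    intro j
    exact Finset.measurable_sum _ (fun i _ => measurable_pi_apply i)
  have hψ : Measurable ψ := Finset.measurable_sum _ (fun i _ => measurable_pi_apply i)
  have h2 := h.comp hφ hψ
  convert h2 using 1
  · funext ω
    funext j
    show ∑ i ∈ Finset.Icc 1 ((j : ℕ) + 1), X i ω
        = ∑ i ∈ Finset.univ.filter (fun i : T₁ => ((i : Fin n) : ℕ) ≤ (j : ℕ)),
            X (((i : Fin n) : ℕ) + 1) ω
    rw [Finset.sum_filter, Finset.sum_coe_sort T₁
      (fun i : Fin n => if (i : ℕ) ≤ (j : ℕ) then X ((i : ℕ) + 1) ω else 0),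
      ← Finset.sum_filter]
    rw [sum_fin_image (T₁.filter (fun i => (i : ℕ) ≤ (j : ℕ))) (fun m => X m ω)
      (Finset.Icc 1 ((j : ℕ) + 1))]
    intro m
    simp only [Finset.mem_filter, Finset.mem_univ, true_and, Finset.mem_Icc, hT₁]
    constructor
    · rintro h
      have hj := j.isLt
      refine ⟨⟨m - 1, by omega⟩, ?_⟩
      simp only [Fin.val_mk]
      omega
    · rintro ⟨i, hi⟩
      omega
  · funext ω
    show ∑ i ∈ Finset.Icc (k + 1) n, X i ω
        = ∑ i : T₂, X (((i : Fin n) : ℕ) + 1) ω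
    rw [Finset.sum_coe_sort T₂ (fun i : Fin n => X ((i : ℕ) + 1) ω)]
    rw [sum_fin_image T₂ (fun m => X m ω) (Finset.Icc (k + 1) n)]
    intro m
    simp only [Finset.mem_filter, Finset.mem_univ, true_and, Finset.mem_Icc, hT₂]
    constructor
    · rintro h
      refine ⟨⟨m - 1, by omega⟩, ?_⟩
      simp only [Fin.val_mk]
      omega
    · rintro ⟨i, hi⟩
      have := i.isLt
      omega

/-- **Classical Lévy–Skorohod inequality.**  If `X 1, …, X n` are independent real
random variables with partial sums `S k`, then for `λ > 0` and `0 < α < 1`,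
`ℙ(max_{1 ≤ k ≤ n} S k > λ) ⋅ min_{1 ≤ k ≤ n} ℙ(S n - S k ≥ -(1-α)λ) ≤ ℙ(S n > αλ)`. -/
theorem classical_levy_skorohod_inequality {Ω : Type*} [MeasurableSpace Ω]
    (μ : Measure Ω) [IsProbabilityMeasure μ]
    (n : ℕ) (hn : 1 ≤ n) (X : ℕ → Ω → ℝ)
    (hmeas : ∀ k, Measurable (X k))
    (hindep : iIndepFun (fun i : Fin n => X (i + 1)) μ)
    (S : ℕ → Ω → ℝ) (hS : ∀ k, S k = fun ω => ∑ i ∈ Finset.Icc 1 k, X i ω)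
    (l : ℝ) (hl : 0 < l) (a : ℝ) (ha0 : 0 < a) (ha1 : a < 1) :
    μ {ω | ∃ k, 1 ≤ k ∧ k ≤ n ∧ l < S k ω} *
        (Finset.Icc 1 n).inf' (Finset.nonempty_Icc.mpr hn)
          (fun k => μ {ω | -(1 - a) * l ≤ S n ω - S k ω}) ≤
      μ {ω | a * l < S n ω} := by
  classical
  have hSmeas : ∀ k, Measurable (S k) := by
    intro k
    rw [hS k]
    exact Finset.measurable_sum _ (fun i _ => hmeas i)
  set A : ℕ → Set Ω := fun k => {ω | l < S k ω ∧ ∀ j, 1 ≤ j → j < k → S j ω ≤ l} with hA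
  set B : ℕ → Set Ω := fun k => {ω | -(1 - a) * l ≤ S n ω - S k ω} with hB
  have hAmeas : ∀ k, MeasurableSet (A k) := by
    intro k
    have h1 : MeasurableSet {ω | l < S k ω} := measurableSet_lt measurable_const (hSmeas k)
    have h2 : MeasurableSet {ω | ∀ j, 1 ≤ j → j < k → S j ω ≤ l} := by
      have : {ω | ∀ j, 1 ≤ j → j < k → S j ω ≤ l}
          = ⋂ j, ⋂ (_ : 1 ≤ j), ⋂ (_ : j < k), {ω | S j ω ≤ l} := by
        ext ω; simp
      rw [this]
      exact MeasurableSet.iInter fun j => MeasurableSet.iInter fun _ =>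
        MeasurableSet.iInter fun _ => measurableSet_le (hSmeas j) measurable_const
    exact h1.inter h2
  have hBmeas : ∀ k, MeasurableSet (B k) := by
    intro k
    exact measurableSet_le measurable_const ((hSmeas n).sub (hSmeas k))
  -- decomposition of the maximum event
  have hE : {ω | ∃ k, 1 ≤ k ∧ k ≤ n ∧ l < S k ω} = ⋃ k ∈ Finset.Icc 1 n, A k := by
    ext ω
    simp only [Set.mem_setOf_eq, Set.mem_iUnion, Finset.mem_Icc, hA]
    constructor
    · rintro ⟨k, hk1, hkn, hk⟩
      have hex : ∃ m, l < S m ω := ⟨k, hk⟩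
      set k₀ := Nat.find hex with hk₀
      have hfind : l < S k₀ ω := Nat.find_spec hex
      have hmin : ∀ j, j < k₀ → ¬ l < S j ω := fun j hj => Nat.find_min hex hj
      have hk₀1 : 1 ≤ k₀ := by
        by_contra h
        have : k₀ = 0 := by omega
        rw [this] at hfind
        rw [hS 0] at hfind
        simp at hfind
        linarith
      have hk₀n : k₀ ≤ n := le_trans (Nat.find_min' hex hk) hkn
      exact ⟨k₀, ⟨hk₀1, hk₀n⟩, hfind, fun j _ hj => le_of_not_gt (hmin j hj)⟩
    · rintro ⟨k, ⟨hk1, hkn⟩, hk, _⟩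
      exact ⟨k, hk1, hkn, hk⟩
  -- disjointness
  have hdisjA : (↑(Finset.Icc 1 n) : Set ℕ).PairwiseDisjoint A := by
    intro i hi j hj hij
    simp only [Finset.coe_Icc, Set.mem_Icc] at hi hj
    apply Set.disjoint_left.mpr
    intro ω hωi hωj
    rcases lt_or_gt_of_ne hij with h | h
    · exact absurd (hωj.2 i hi.1 h) (not_le.mpr hωi.1)
    · exact absurd (hωi.2 j hj.1 h) (not_le.mpr hωj.1)
  -- key independence step
  have hS' : ∀ m ω, S m ω = ∑ i ∈ Finset.Icc 1 m, X i ω := fun m ω => by rw [hS]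
  have hkey : ∀ k ∈ Finset.Icc 1 n, μ (A k ∩ B k) = μ (A k) * μ (B k) := by
    intro k hk
    rw [Finset.mem_Icc] at hk
    obtain ⟨hk1, hkn⟩ := hk
    have hind := indep_aux μ n k hk1 hkn X hmeas hindep
    have hMVmeas : MeasurableSet {y : Fin k → ℝ |
        l < y ⟨k - 1, by omega⟩ ∧ ∀ j : Fin k, (j : ℕ) + 1 < k → y j ≤ l} := by
      have h1 : MeasurableSet {y : Fin k → ℝ | l < y ⟨k - 1, by omega⟩} :=
        measurableSet_lt measurable_const (measurable_pi_apply _)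
      have h2 : MeasurableSet {y : Fin k → ℝ | ∀ j : Fin k, (j : ℕ) + 1 < k → y j ≤ l} := by
        have heq : {y : Fin k → ℝ | ∀ j : Fin k, (j : ℕ) + 1 < k → y j ≤ l}
            = ⋂ j : Fin k, ⋂ (_ : (j : ℕ) + 1 < k), {y : Fin k → ℝ | y j ≤ l} := by
          ext y; simp
        rw [heq]
        exact MeasurableSet.iInter fun j => MeasurableSet.iInter fun _ =>
          measurableSet_le (measurable_pi_apply _) measurable_const
      exact h1.inter h2
    have hAV : A k = (fun ω => fun j : Fin k => ∑ i ∈ Finset.Icc 1 ((j : ℕ) + 1), X i ω) ⁻¹'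
        {y : Fin k → ℝ | l < y ⟨k - 1, by omega⟩ ∧ ∀ j : Fin k, (j : ℕ) + 1 < k → y j ≤ l} := by
      ext ω
      simp only [hA, Set.mem_setOf_eq, Set.mem_preimage, Fin.val_mk]
      have hkk : k - 1 + 1 = k := by omega
      rw [hkk]
      constructor
      · rintro ⟨h1, h2⟩
        refine ⟨by rw [← hS']; exact h1, fun j hj => by rw [← hS']; exact h2 _ (by omega) hj⟩
      · rintro ⟨h1, h2⟩
        refine ⟨by rw [hS']; exact h1, ?_⟩
        intro j hj1 hjk
        have hh := h2 ⟨j - 1, by omega⟩ (by simp only [Fin.val_mk]; omega)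
        simp only [Fin.val_mk] at hh
        rw [hS']
        rwa [show j - 1 + 1 = j from by omega] at hh
    have hBW : B k = (fun ω => ∑ i ∈ Finset.Icc (k + 1) n, X i ω) ⁻¹'
        (Set.Ici (-(1 - a) * l)) := by
      ext ω
      simp only [hB, Set.mem_setOf_eq, Set.mem_preimage, Set.mem_Ici]
      have hsplit : S k ω + ∑ i ∈ Finset.Icc (k + 1) n, X i ω = S n ω := by
        rw [hS' k, hS' n]
        have hun : Finset.Icc 1 n = Finset.Icc 1 k ∪ Finset.Icc (k + 1) n := by
          ext m; simp only [Finset.mem_Icc, Finset.mem_union]; omega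
        have hdj : Disjoint (Finset.Icc 1 k) (Finset.Icc (k + 1) n) := by
          rw [Finset.disjoint_left]
          intro m h1 h2
          simp only [Finset.mem_Icc] at h1 h2
          omega
        rw [hun, Finset.sum_union hdj]
      constructor
      · intro h; linarith
      · intro h; linarith
    rw [hAV, hBW]
    exact hind.measure_inter_preimage_eq_mul _ _ hMVmeas measurableSet_Ici
  -- the intersections are inside the target event
  have hsub : ∀ k ∈ Finset.Icc 1 n, A k ∩ B k ⊆ {ω | a * l < S n ω} := by
    intro k hk ω hω
    obtain ⟨⟨h1, _⟩, h2⟩ := hω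
    simp only [Set.mem_setOf_eq]
    have : -(1 - a) * l ≤ S n ω - S k ω := h2
    nlinarith
  -- put everything together
  set m := (Finset.Icc 1 n).inf' (Finset.nonempty_Icc.mpr hn)
      (fun k => μ {ω | -(1 - a) * l ≤ S n ω - S k ω}) with hm
  have hmB : ∀ k ∈ Finset.Icc 1 n, m ≤ μ (B k) := by
    intro k hk
    exact Finset.inf'_le _ hk
  calc μ {ω | ∃ k, 1 ≤ k ∧ k ≤ n ∧ l < S k ω} * m
      = (∑ k ∈ Finset.Icc 1 n, μ (A k)) * m := by
        rw [hE, measure_biUnion_finset hdisjA (fun k _ => hAmeas k)]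
    _ = ∑ k ∈ Finset.Icc 1 n, μ (A k) * m := by rw [Finset.sum_mul]
    _ ≤ ∑ k ∈ Finset.Icc 1 n, μ (A k ∩ B k) := by
        apply Finset.sum_le_sum
        intro k hk
        rw [hkey k hk]
        exact mul_le_mul_right (hmB k hk) _
    _ = μ (⋃ k ∈ Finset.Icc 1 n, (A k ∩ B k)) := by
        rw [measure_biUnion_finset]
        · exact fun i hi j hj hij =>
            Disjoint.mono Set.inter_subset_left Set.inter_subset_left (hdisjA hi hj hij)
        · exact fun k _ => (hAmeas k).inter (hBmeas k)
    _ ≤ μ {ω | a * l < S n ω} := by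
        apply measure_mono
        exact Set.iUnion₂_subset hsub
end

section
/- Let x ∈ 𝔐 be self-adjoint with median m, and set x̂ := x ⊗ 1 − 1 ⊗ x in 𝔐 ⊗ 𝔐 with trace τ ⊗ τ. Then for every λ ∈ ℝ, τ(e_λ^⊥(x − m)) ≤ 2 (τ ⊗ τ)(e_λ^⊥(x̂)). -/
open scoped NNReal

/-- A *quantum probability space*: a von Neumann algebra `M` (presented as a unital
C⋆-algebra; the weak closure properties that we use are recorded explicitly as axioms
below) together with a normal faithful tracial state `τ` and, for every self-adjoint
element `x` and every Borel set `B ⊆ ℝ`, the spectral projection `specProj x B = E_x(B)`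
coming from the spectral resolution `x = ∫ λ dE_x(λ)`. -/
structure QuantumProbabilitySpace (M : Type*) [CStarAlgebra M] [PartialOrder M]
    [StarOrderedRing M] where
  /-- the state -/
  τ : M →ₗ[ℂ] ℂ
  tracial : ∀ a b : M, τ (a * b) = τ (b * a)
  normalized : τ 1 = 1
  pos : ∀ a : M, 0 ≤ a → 0 ≤ (τ a).re ∧ (τ a).im = 0
  faithful : ∀ a : M, 0 ≤ a → τ a = 0 → a = 0
  /-- spectral projections of self-adjoint elements -/
  specProj : M → Set ℝ → M
  specProj_isIdempotentElem : ∀ (x : M) (B : Set ℝ), IsSelfAdjoint x → MeasurableSet B →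
    IsIdempotentElem (specProj x B)
  specProj_isSelfAdjoint : ∀ (x : M) (B : Set ℝ), IsSelfAdjoint x → MeasurableSet B →
    IsSelfAdjoint (specProj x B)
  specProj_univ : ∀ x : M, IsSelfAdjoint x → specProj x Set.univ = 1
  specProj_inter : ∀ (x : M) (B C : Set ℝ), IsSelfAdjoint x → MeasurableSet B →
    MeasurableSet C → specProj x (B ∩ C) = specProj x B * specProj x C
  /-- normality of the state: the spectral distribution is countably additive -/
  specProj_iUnion : ∀ (x : M) (B : ℕ → Set ℝ), IsSelfAdjoint x → (∀ n, MeasurableSet (B n)) →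
    Pairwise (Function.onFun Disjoint B) →
    HasSum (fun n => τ (specProj x (B n))) (τ (specProj x (⋃ n, B n)))
  specProj_commute : ∀ (x : M) (B : Set ℝ), IsSelfAdjoint x → MeasurableSet B →
    Commute x (specProj x B)
  /-- the spectral measure is supported on the spectrum -/
  specProj_spectrum : ∀ (x : M) (B : Set ℝ), IsSelfAdjoint x → MeasurableSet B →
    specProj x B = specProj x (B ∩ spectrum ℝ x)
  /-- `x` compressed to `E_x((-∞, t])` is at most `t` -/
  specProj_le : ∀ (x : M) (t : ℝ), IsSelfAdjoint x →
    specProj x (Set.Iic t) * x * specProj x (Set.Iic t) ≤ (t : ℂ) • specProj x (Set.Iic t)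
  /-- `x` compressed to `E_x([t, ∞))` is at least `t` -/
  specProj_ge : ∀ (x : M) (t : ℝ), IsSelfAdjoint x →
    (t : ℂ) • specProj x (Set.Ici t) ≤ specProj x (Set.Ici t) * x * specProj x (Set.Ici t)
  /-- compatibility with the functional calculus: `E_{f(x)}(B) = E_x(f⁻¹(B))` -/
  specProj_cfc : ∀ (x : M) (f : ℝ → ℝ) (B : Set ℝ), IsSelfAdjoint x → Continuous f →
    MeasurableSet B → specProj (cfc f x) B = specProj x (f ⁻¹' B)
  /-- the spectral distribution of a (bounded) self-adjoint element is determined by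
  its moments -/
  moments_determine : ∀ x y : M, IsSelfAdjoint x → IsSelfAdjoint y →
    (∀ n : ℕ, τ (x ^ n) = τ (y ^ n)) →
    ∀ B : Set ℝ, MeasurableSet B → τ (specProj x B) = τ (specProj y B)

/-- a projection in a von Neumann algebra: a self-adjoint idempotent -/
def IsProjection {M : Type*} [CStarAlgebra M] [PartialOrder M] [StarOrderedRing M]
    (p : M) : Prop := IsSelfAdjoint p ∧ IsIdempotentElem p

/-- `r` is the supremum `⋁ F` of a family `F` of projections in the lattice of
projections of a von Neumann algebra -/
def IsSupProjection {M : Type*} [CStarAlgebra M] [PartialOrder M] [StarOrderedRing M]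
    (F : Set M) (r : M) : Prop :=
  IsProjection r ∧ (∀ p ∈ F, p * r = p) ∧
    ∀ s : M, IsProjection s → (∀ p ∈ F, p * s = p) → r * s = r

/-- the absolute value `|x| = (x⋆x)^{1/2}` of an element of a C⋆-algebra -/
noncomputable def qAbs {M : Type*} [CStarAlgebra M] [PartialOrder M] [StarOrderedRing M]
    (x : M) : M := CFC.sqrt (star x * x)

namespace QuantumProbabilitySpace

variable {M : Type*} [CStarAlgebra M] [PartialOrder M] [StarOrderedRing M]
variable (Q : QuantumProbabilitySpace M)

/-- the spectral distribution `B ↦ τ(E_x(B))` of a self-adjoint `x` -/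
noncomputable def prob (x : M) (B : Set ℝ) : ℝ := (Q.τ (Q.specProj x B)).re


/-- `m` is a median of the self-adjoint element `x`:
`τ(e_{(-∞, m]}(x)) ≥ 1/2` and `τ(e_m^⊥(x)) = τ(e_{[m, ∞)}(x)) ≥ 1/2`. -/
def IsMedian (x : M) (m : ℝ) : Prop :=
  1 / 2 ≤ Q.prob x (Set.Iic m) ∧ 1 / 2 ≤ Q.prob x (Set.Ici m)

/-- two self-adjoint random variables are identically distributed if their spectral
distributions coincide -/
def IdentDistrib (x y : M) : Prop :=
  ∀ B : Set ℝ, MeasurableSet B → Q.τ (Q.specProj x B) = Q.τ (Q.specProj y B)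

/-- a self-adjoint random variable is symmetric if `x` and `-x` are identically
distributed -/
def IsSymmetric (x : M) : Prop := Q.IdentDistrib x (-x)

/-- the von Neumann subalgebra `W*(S)` generated by a set `S`: the smallest subset
containing `S` which is a unital star subalgebra closed under taking spectral
projections (the abstract surrogate for weak closedness). -/
def wstar (S : Set M) : Set M :=
  ⋂₀ {A : Set M | S ⊆ A ∧ (1 : M) ∈ A ∧ (∀ a ∈ A, ∀ b ∈ A, a + b ∈ A) ∧
    (∀ a ∈ A, ∀ b ∈ A, a * b ∈ A) ∧ (∀ (c : ℂ), ∀ a ∈ A, c • a ∈ A) ∧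
    (∀ a ∈ A, star a ∈ A) ∧
    (∀ a ∈ A, ∀ B : Set ℝ, MeasurableSet B → Q.specProj a B ∈ A)}

/-- the `p`-th power `‖x‖_p^p = τ(|x|^p)` of the noncommutative `L_p`-norm -/
noncomputable def lpNormPow (x : M) (p : ℝ) : ℝ := (Q.τ (CFC.rpow (qAbs x) p)).re

end QuantumProbabilitySpace


/-- A realization of the von Neumann tensor product `M ⊗ M`: a quantum probability
space `(N, R.τ)` together with two unital trace-commuting ⋆-embeddings
`ι₁ : x ↦ x ⊗ 1` and `ι₂ : x ↦ 1 ⊗ x` whose ranges commute, such that the trace is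
multiplicative on products, `(τ ⊗ τ)((a ⊗ 1)(1 ⊗ b)) = τ(a) τ(b)` (tensor
independence of the two copies), and which are compatible with spectral
projections (i.e. are normal). -/
structure QuantumProbabilitySpace.IsTensorSquare {M N : Type*}
    [CStarAlgebra M] [PartialOrder M] [StarOrderedRing M]
    [CStarAlgebra N] [PartialOrder N] [StarOrderedRing N]
    (Q : QuantumProbabilitySpace M) (R : QuantumProbabilitySpace N)
    (i1 i2 : M →⋆ₐ[ℂ] N) : Prop where
  commutes : ∀ a b : M, Commute (i1 a) (i2 b)
  trace_mul : ∀ a b : M, R.τ (i1 a * i2 b) = Q.τ a * Q.τ b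
  specProj_fst : ∀ (a : M) (B : Set ℝ), IsSelfAdjoint a → MeasurableSet B →
    R.specProj (i1 a) B = i1 (Q.specProj a B)
  specProj_snd : ∀ (a : M) (B : Set ℝ), IsSelfAdjoint a → MeasurableSet B →
    R.specProj (i2 a) B = i2 (Q.specProj a B)



section Aux

namespace QuantumProbabilitySpace

variable {M : Type*} [CStarAlgebra M] [PartialOrder M] [StarOrderedRing M]
variable (Q : QuantumProbabilitySpace M)

lemma proj_nonneg {p : M} (hsa : IsSelfAdjoint p) (hid : IsIdempotentElem p) :
    (0 : M) ≤ p := by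
  have h : p = star p * p := by
    conv_lhs => rw [← hid]
    rw [hsa.star_eq]
  rw [h]; exact star_mul_self_nonneg p

lemma proj_le_one {p : M} (hsa : IsSelfAdjoint p) (hid : IsIdempotentElem p) :
    p ≤ (1 : M) := by
  have h2 : IsSelfAdjoint (1 - p) := (IsSelfAdjoint.one M).sub hsa
  have := proj_nonneg h2 hid.one_sub
  exact sub_nonneg.mp this

lemma tau_re_nonneg {a : M} (ha : 0 ≤ a) : 0 ≤ (Q.τ a).re := (Q.pos a ha).1

lemma tau_im_zero {a : M} (ha : 0 ≤ a) : (Q.τ a).im = 0 := (Q.pos a ha).2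

lemma tau_re_mono {a b : M} (h : a ≤ b) : (Q.τ a).re ≤ (Q.τ b).re := by
  have h0 : 0 ≤ (Q.τ (b - a)).re := Q.tau_re_nonneg (sub_nonneg.mpr h)
  rw [map_sub, Complex.sub_re] at h0; linarith

lemma specProj_empty {x : M} (hx : IsSelfAdjoint x) : Q.specProj x ∅ = 0 := by
  have hs := Q.specProj_iUnion x (fun _ => ∅) hx (fun _ => MeasurableSet.empty)
    (by intro i j hij; simp [Function.onFun])
  rw [Set.iUnion_empty] at hs
  have hzero : Q.τ (Q.specProj x ∅) = 0 :=
    tendsto_nhds_unique tendsto_const_nhds hs.summable.tendsto_atTop_zero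
  exact Q.faithful _ (proj_nonneg (Q.specProj_isSelfAdjoint x ∅ hx MeasurableSet.empty)
    (Q.specProj_isIdempotentElem x ∅ hx MeasurableSet.empty)) hzero

lemma specProj_disjoint_mul {x : M} (hx : IsSelfAdjoint x) {B C : Set ℝ}
    (hB : MeasurableSet B) (hC : MeasurableSet C) (hd : Disjoint B C) :
    Q.specProj x B * Q.specProj x C = 0 := by
  rw [← Q.specProj_inter x B C hx hB hC, Set.disjoint_iff_inter_eq_empty.mp hd,
    Q.specProj_empty hx]

lemma tau_specProj_union {x : M} (hx : IsSelfAdjoint x) {B C : Set ℝ}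
    (hB : MeasurableSet B) (hC : MeasurableSet C) (hd : Disjoint B C) :
    Q.τ (Q.specProj x (B ∪ C)) = Q.τ (Q.specProj x B) + Q.τ (Q.specProj x C) := by
  classical
  set F : ℕ → Set ℝ := fun n => if n = 0 then B else if n = 1 then C else ∅ with hF
  have hmeas : ∀ n, MeasurableSet (F n) := by
    intro n; simp only [hF]
    split_ifs <;> first | exact hB | exact hC | exact MeasurableSet.empty
  have hpair : Pairwise (Function.onFun Disjoint F) := by
    intro i j hij
    simp only [Function.onFun, hF]
    split_ifs with h1 h2 h3 h4 h5 <;>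
      simp_all [hd, hd.symm, Set.disjoint_empty, Set.empty_disjoint]
  have hsum1 := Q.specProj_iUnion x F hx hmeas hpair
  have hU : (⋃ n, F n) = B ∪ C := by
    ext t
    simp only [Set.mem_iUnion, Set.mem_union]
    constructor
    · rintro ⟨n, hn⟩
      by_cases h0 : n = 0
      · left; simpa [hF, h0] using hn
      by_cases h1 : n = 1
      · right; simpa [hF, h1] using hn
      simp [hF, h0, h1] at hn
    · rintro (h | h)
      exacts [⟨0, by simp [hF, h]⟩, ⟨1, by simp [hF, h]⟩]
  rw [hU] at hsum1
  have hsum2 : HasSum (fun n => Q.τ (Q.specProj x (F n)))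
      (Q.τ (Q.specProj x B) + Q.τ (Q.specProj x C)) := by
    have hz : ∀ n ∉ ({0, 1} : Finset ℕ), Q.τ (Q.specProj x (F n)) = 0 := by
      intro n hn
      simp only [Finset.mem_insert, Finset.mem_singleton, not_or] at hn
      simp [hF, hn.1, hn.2, Q.specProj_empty hx]
    have : HasSum (fun n => Q.τ (Q.specProj x (F n)))
        (∑ b ∈ ({0, 1} : Finset ℕ), Q.τ (Q.specProj x (F b))) := hasSum_sum_of_ne_finset_zero hz
    rwa [Finset.sum_pair (by norm_num : (0:ℕ) ≠ 1), show F 0 = B by simp [hF],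
      show F 1 = C by simp [hF]] at this
  exact hsum1.unique hsum2


lemma specProj_Ici_add_Iio {x : M} (hx : IsSelfAdjoint x) (t : ℝ) :
    Q.specProj x (Set.Ici t) + Q.specProj x (Set.Iio t) = 1 := by
  set e := Q.specProj x (Set.Ici t) with he
  set f := Q.specProj x (Set.Iio t) with hf
  have hdisj : Disjoint (Set.Ici t) (Set.Iio t) := by
    rw [Set.disjoint_left]; intro z hz hz'; exact absurd (Set.mem_Iio.mp hz') (not_lt.mpr (Set.mem_Ici.mp hz))
  have hef : e * f = 0 := Q.specProj_disjoint_mul hx measurableSet_Ici measurableSet_Iio hdisj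
  have hfe : f * e = 0 := Q.specProj_disjoint_mul hx measurableSet_Iio measurableSet_Ici hdisj.symm
  have hesa : IsSelfAdjoint e := Q.specProj_isSelfAdjoint x _ hx measurableSet_Ici
  have hfsa : IsSelfAdjoint f := Q.specProj_isSelfAdjoint x _ hx measurableSet_Iio
  have heid : IsIdempotentElem e := Q.specProj_isIdempotentElem x _ hx measurableSet_Ici
  have hfid : IsIdempotentElem f := Q.specProj_isIdempotentElem x _ hx measurableSet_Iio
  have hgid : IsIdempotentElem (e + f) := by
    unfold IsIdempotentElem
    rw [add_mul, mul_add, mul_add, heid, hfid, hef, hfe, add_zero, zero_add]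
  have hgsa : IsSelfAdjoint (e + f) := hesa.add hfsa
  have h1 : (0 : M) ≤ 1 - (e + f) :=
    proj_nonneg ((IsSelfAdjoint.one M).sub hgsa) hgid.one_sub
  have htau : Q.τ (1 - (e + f)) = 0 := by
    have hu := Q.tau_specProj_union hx measurableSet_Ici measurableSet_Iio hdisj
    rw [Set.union_comm, Set.Iio_union_Ici, Q.specProj_univ x hx] at hu
    rw [map_sub, map_add, Q.normalized]
    rw [← he, ← hf, Q.normalized] at hu
    rw [← hu, sub_self]
  have h2 := Q.faithful _ h1 htau
  exact (sub_eq_zero.mp h2).symm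

lemma specProj_Iio_compress {x : M} (hx : IsSelfAdjoint x) (t : ℝ) :
    Q.specProj x (Set.Iio t) * x * Q.specProj x (Set.Iio t) ≤
      (t : ℂ) • Q.specProj x (Set.Iio t) := by
  set f := Q.specProj x (Set.Iio t) with hf
  set q := Q.specProj x (Set.Iic t) with hq
  have hfsa : IsSelfAdjoint f := Q.specProj_isSelfAdjoint x _ hx measurableSet_Iio
  have hfid : IsIdempotentElem f := Q.specProj_isIdempotentElem x _ hx measurableSet_Iio
  have hfq : f * q = f := by
    rw [← Q.specProj_inter x _ _ hx measurableSet_Iio measurableSet_Iic,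
      Set.inter_eq_left.mpr Set.Iio_subset_Iic_self]
  have hqf : q * f = f := by
    rw [← Q.specProj_inter x _ _ hx measurableSet_Iic measurableSet_Iio,
      Set.inter_eq_right.mpr Set.Iio_subset_Iic_self]
  have hle := Q.specProj_le x t hx
  have hc := star_left_conjugate_le_conjugate hle f
  rw [hfsa.star_eq] at hc
  have key : f * (q * x * q) * f = f * x * f := by
    calc f * (q * x * q) * f = ((f * q) * x) * (q * f) := by simp only [mul_assoc]
      _ = f * x * f := by rw [hfq, hqf]
  calc f * x * f = f * (q * x * q) * f := key.symm
      _ ≤ f * ((t : ℂ) • q) * f := hc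
      _ = (t : ℂ) • f := by
        rw [mul_smul_comm, smul_mul_assoc, hfq, hfid.eq]

end QuantumProbabilitySpace

/-- a star algebra homomorphism between C⋆-algebras is monotone -/
lemma StarAlgHomCStar.mono {M N : Type*}
    [CStarAlgebra M] [PartialOrder M] [StarOrderedRing M]
    [CStarAlgebra N] [PartialOrder N] [StarOrderedRing N]
    (φ : M →⋆ₐ[ℂ] N) {a b : M} (h : a ≤ b) : φ a ≤ φ b := by
  rw [← sub_nonneg] at h ⊢
  rw [← map_sub]
  set c := b - a with hc
  have hs : CFC.sqrt c * CFC.sqrt c = c := CFC.sqrt_mul_sqrt_self c h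
  have hsa : star (CFC.sqrt c) = CFC.sqrt c :=
    (IsSelfAdjoint.of_nonneg (CFC.sqrt_nonneg c)).star_eq
  calc (0 : N) ≤ star (φ (CFC.sqrt c)) * φ (CFC.sqrt c) := star_mul_self_nonneg _
    _ = φ c := by rw [← map_star, hsa, ← map_mul, hs]

/-- moving a commuting projection through a sandwich -/
lemma mul_conj_eq {N : Type*} [CStarAlgebra N] {P Qc A : N}
    (hPQ : Commute P Qc) (hAQ : Commute A Qc) (hQid : IsIdempotentElem Qc) :
    (P * Qc) * A * (P * Qc) = Qc * (P * A * P) * Qc := by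
  have hPA_Q : Commute (P * A) Qc := hPQ.mul_left hAQ
  calc (P * Qc) * A * (P * Qc)
      = P * (Qc * A) * (P * Qc) := by rw [mul_assoc P Qc A]
    _ = P * (A * Qc) * (P * Qc) := by rw [← hAQ.eq]
    _ = ((P * A) * Qc) * (Qc * P) := by rw [← mul_assoc P A Qc, hPQ.eq]
    _ = (P * A) * ((Qc * Qc) * P) := by simp only [mul_assoc]
    _ = (P * A) * (Qc * P) := by rw [hQid]
    _ = ((P * A) * Qc) * P := by simp only [mul_assoc]
    _ = (Qc * (P * A)) * P := by rw [hPA_Q.eq]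
    _ = Qc * (P * A * P) := by simp only [mul_assoc]
    _ = Qc * (P * A * P) * Qc := by
        have hPAP_Q : Commute (P * A * P) Qc := hPA_Q.mul_left hPQ
        conv_rhs => rw [mul_assoc, hPAP_Q.eq, ← mul_assoc, hQid]

end Aux


section Gap

namespace QuantumProbabilitySpace

variable {M : Type*} [CStarAlgebra M] [PartialOrder M] [StarOrderedRing M]
variable (Q : QuantumProbabilitySpace M)

/-- If a projection `r` commutes with `y` and `r y r ≥ l r`, then
`τ(r) ≤ τ(E_y [l', ∞))` for every `l' < l`. -/
lemma gap_lemma {y r : M} (hy : IsSelfAdjoint y) (hrsa : IsSelfAdjoint r)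
    (hrid : IsIdempotentElem r) (hcomm : y * r = r * y) {l l' : ℝ} (hll : l' < l)
    (hge : (l : ℂ) • r ≤ r * y * r) : (Q.τ r).re ≤ Q.prob y (Set.Ici l') := by
  set e := Q.specProj y (Set.Ici l') with he
  set f := Q.specProj y (Set.Iio l') with hf
  have hesa : IsSelfAdjoint e := Q.specProj_isSelfAdjoint y _ hy measurableSet_Ici
  have heid : IsIdempotentElem e := Q.specProj_isIdempotentElem y _ hy measurableSet_Ici
  have hfsa : IsSelfAdjoint f := Q.specProj_isSelfAdjoint y _ hy measurableSet_Iio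
  have hfid : IsIdempotentElem f := Q.specProj_isIdempotentElem y _ hy measurableSet_Iio
  have hyf : y * f = f * y := (Q.specProj_commute y _ hy measurableSet_Iio).eq
  have hfyf : f * y * f ≤ (l' : ℂ) • f := Q.specProj_Iio_compress hy l'
  -- `f * r * f` is positive
  have hconj : f * r * f = star (r * f) * (r * f) := by
    rw [star_mul, hrsa.star_eq, hfsa.star_eq]
    calc f * r * f = ((f * r) * r) * f := by rw [mul_assoc f r r, hrid.eq]
      _ = (f * r) * (r * f) := by simp only [mul_assoc]
  have hfrf_nonneg : (0 : M) ≤ f * r * f := by rw [hconj]; exact star_mul_self_nonneg _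
  -- trace identities
  have t1 : Q.τ (f * r * f) = Q.τ (f * r) := by
    rw [Q.tracial (f * r) f, ← mul_assoc, hfid.eq]
  have t1' : Q.τ (r * f * r) = Q.τ (f * r) := by
    rw [Q.tracial (r * f) r, ← mul_assoc, hrid.eq, Q.tracial r f]
  have hryr : r * y * r = y * r := by rw [← hcomm, mul_assoc, hrid.eq]
  -- lower bound : l * τ(f r) ≤ Re τ(y r f)
  have hb1 : l * (Q.τ (f * r)).re ≤ (Q.τ (y * r * f)).re := by
    have hc := star_left_conjugate_le_conjugate hge f
    rw [hfsa.star_eq] at hc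
    have hlhs : f * ((l : ℂ) • r) * f = (l : ℂ) • (f * r * f) := by
      rw [mul_smul_comm, smul_mul_assoc]
    rw [hlhs, hryr] at hc
    have hmono := Q.tau_re_mono hc
    have h3 : Q.τ (f * (y * r) * f) = Q.τ (y * r * f) := by
      rw [Q.tracial (f * (y * r)) f, ← mul_assoc, hfid.eq, Q.tracial f (y * r)]
    rw [map_smul, h3] at hmono
    have hre : ((l : ℂ) • Q.τ (f * r * f)).re = l * (Q.τ (f * r * f)).re := by
      simp [smul_eq_mul, Complex.mul_re]
    rw [hre, t1] at hmono
    exact hmono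
  -- upper bound : Re τ(y r f) ≤ l' * τ(f r)
  have hb2 : (Q.τ (y * r * f)).re ≤ l' * (Q.τ (f * r)).re := by
    have hfyf2 : f * y * f = y * f := by rw [← hyf, mul_assoc, hfid.eq]
    have hc2 := star_left_conjugate_le_conjugate hfyf r
    rw [hrsa.star_eq, hfyf2] at hc2
    have hrhs : r * ((l' : ℂ) • f) * r = (l' : ℂ) • (r * f * r) := by
      rw [mul_smul_comm, smul_mul_assoc]
    rw [hrhs] at hc2
    have hmono := Q.tau_re_mono hc2
    have h4 : Q.τ (r * (y * f) * r) = Q.τ (y * r * f) := by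
      rw [Q.tracial (r * (y * f)) r, ← mul_assoc, hrid.eq, hyf, Q.tracial r (f * y),
        mul_assoc, Q.tracial f (y * r)]
    rw [map_smul, h4] at hmono
    have hre : ((l' : ℂ) • Q.τ (r * f * r)).re = l' * (Q.τ (r * f * r)).re := by
      simp [smul_eq_mul, Complex.mul_re]
    rw [hre, t1'] at hmono
    exact hmono
  -- hence τ(f r) = 0 and f r f = 0
  have htnonneg : 0 ≤ (Q.τ (f * r)).re := by
    have := Q.tau_re_nonneg hfrf_nonneg; rwa [t1] at this
  have htzero : (Q.τ (f * r)).re = 0 := by nlinarith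
  have himzero : (Q.τ (f * r * f)).im = 0 := Q.tau_im_zero hfrf_nonneg
  have htC : Q.τ (f * r * f) = 0 := by
    apply Complex.ext
    · rw [t1]; exact htzero
    · exact himzero
  have hfrf : f * r * f = 0 := Q.faithful _ hfrf_nonneg htC
  have hrf : r * f = 0 := by
    rw [hconj] at hfrf
    exact (CStarRing.star_mul_self_eq_zero_iff (r * f)).mp hfrf
  -- hence r ≤ e
  have hef1 : e + f = 1 := Q.specProj_Ici_add_Iio hy l'
  have hre' : r * e = r := by
    have h5 : r * (e + f) = r := by rw [hef1, mul_one]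
    rwa [mul_add, hrf, add_zero] at h5
  have her : e * r = r := by
    rw [← hesa.star_eq, ← hrsa.star_eq, ← star_mul, hre', hrsa.star_eq]
  have here : e * r * e = r := by rw [her, hre']
  have hle_e : r ≤ e := by
    have hc3 := star_left_conjugate_le_conjugate (proj_le_one hrsa hrid) e
    rw [hesa.star_eq, mul_one, here, heid.eq] at hc3
    exact hc3
  exact Q.tau_re_mono hle_e

end QuantumProbabilitySpace

end Gap


section Limit

namespace QuantumProbabilitySpace

variable {M : Type*} [CStarAlgebra M] [PartialOrder M] [StarOrderedRing M]
variable (Q : QuantumProbabilitySpace M)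

lemma prob_Ici_split {y : M} (hy : IsSelfAdjoint y) {u v : ℝ} (huv : u ≤ v) :
    Q.prob y (Set.Ici u) = Q.prob y (Set.Ico u v) + Q.prob y (Set.Ici v) := by
  have hd : Disjoint (Set.Ico u v) (Set.Ici v) := by
    rw [Set.disjoint_left]; rintro z ⟨_, hz2⟩ hz3; exact absurd hz3 (not_le.mpr hz2)
  have h := Q.tau_specProj_union hy measurableSet_Ico measurableSet_Ici hd
  rw [Set.Ico_union_Ici_eq_Ici huv] at h
  simp only [prob, h, Complex.add_re]

lemma prob_Ico_split {y : M} (hy : IsSelfAdjoint y) {u v w : ℝ} (huv : u ≤ v) (hvw : v ≤ w) :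
    Q.prob y (Set.Ico u w) = Q.prob y (Set.Ico u v) + Q.prob y (Set.Ico v w) := by
  have h := Q.tau_specProj_union hy measurableSet_Ico measurableSet_Ico
    (Set.Ico_disjoint_Ico_same (a := u) (b := v) (c := w))
  rw [Set.Ico_union_Ico_eq_Ico huv hvw] at h
  simp only [prob, h, Complex.add_re]

lemma le_prob_Ici_of_forall_lt {y : M} (hy : IsSelfAdjoint y) {c l : ℝ}
    (h : ∀ l' < l, c ≤ Q.prob y (Set.Ici l')) : c ≤ Q.prob y (Set.Ici l) := by
  classical
  set a : ℕ → ℝ := fun n => l - 1 / (n + 1) with ha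
  have hamono : ∀ i j : ℕ, i ≤ j → a i ≤ a j := by
    intro i j hij
    have hcast : ((i : ℝ) + 1) ≤ ((j : ℝ) + 1) := by
      have : (i : ℝ) ≤ j := Nat.cast_le.mpr hij
      linarith
    have h1 : (1 : ℝ) / ((j : ℝ) + 1) ≤ 1 / ((i : ℝ) + 1) :=
      one_div_le_one_div_of_le (by positivity) hcast
    simp only [ha]; linarith
  have halt : ∀ n : ℕ, a n < l := by
    intro n
    have : (0 : ℝ) < 1 / ((n : ℝ) + 1) := by positivity
    simp only [ha]; linarith
  set ρ : ℕ → ℝ := fun k => Q.prob y (Set.Ico (a k) l) with hρ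
  have hkey : ∀ k : ℕ, c ≤ Q.prob y (Set.Ici l) + ρ k := by
    intro k
    have h1 := h (a k) (halt k)
    rw [Q.prob_Ici_split hy (halt k).le] at h1
    simp only [hρ]; linarith
  set D : ℕ → Set ℝ := fun n => Set.Ico (a n) (a (n + 1)) with hD
  have hDdisj : Pairwise (Function.onFun Disjoint D) := by
    have key : ∀ i j : ℕ, i < j → Disjoint (D i) (D j) := by
      intro i j hij
      rw [Set.disjoint_left]
      rintro z ⟨_, hz2⟩ ⟨hz3, _⟩
      exact absurd (lt_of_lt_of_le hz2 (hamono (i + 1) j hij)) (not_lt.mpr hz3)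
    intro i j hij
    rcases hij.lt_or_gt with h' | h'
    · exact key i j h'
    · exact (key j i h').symm
  have hUD : (⋃ n, D n) = Set.Ico (a 0) l := by
    ext z
    simp only [Set.mem_iUnion, hD, Set.mem_Ico]
    constructor
    · rintro ⟨n, h1, h2⟩
      exact ⟨le_trans (hamono 0 n (Nat.zero_le n)) h1,
        lt_of_lt_of_le h2 (halt (n + 1)).le⟩
    · rintro ⟨h1, h2⟩
      have hex : ∃ n : ℕ, z < a (n + 1) := by
        obtain ⟨n, hn⟩ := exists_nat_one_div_lt (sub_pos.mpr h2)
        refine ⟨n, lt_of_lt_of_le ?_ (hamono n (n + 1) (Nat.le_succ n))⟩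
        simp only [ha]; linarith
      refine ⟨Nat.find hex, ?_, Nat.find_spec hex⟩
      by_cases h0 : Nat.find hex = 0
      · rw [h0]; exact h1
      · obtain ⟨m, hm⟩ := Nat.exists_eq_succ_of_ne_zero h0
        rw [hm]
        have hmin := Nat.find_min hex (m := m) (by omega)
        exact not_lt.mp hmin
  have hsum := Q.specProj_iUnion y D hy (fun n => measurableSet_Ico) hDdisj
  rw [hUD] at hsum
  have hsumre : HasSum (fun n => Q.prob y (D n)) (ρ 0) := Complex.reCLM.hasSum hsum
  have hstep : ∀ k : ℕ, ρ k = Q.prob y (D k) + ρ (k + 1) := fun k =>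
    Q.prob_Ico_split hy (hamono k (k + 1) (Nat.le_succ k)) (halt (k + 1)).le
  have hpartial : ∀ k : ℕ, ρ 0 = (∑ n ∈ Finset.range k, Q.prob y (D n)) + ρ k := by
    intro k
    induction k with
    | zero => simp
    | succ k ih => rw [ih, hstep k, Finset.sum_range_succ]; ring
  have hρ0 : Filter.Tendsto ρ Filter.atTop (nhds 0) := by
    have h1 := hsumre.tendsto_sum_nat
    have h2 : ρ = fun k => ρ 0 - ∑ n ∈ Finset.range k, Q.prob y (D n) := by
      funext k; have := hpartial k; linarith
    rw [h2]
    simpa using Filter.Tendsto.sub (tendsto_const_nhds (x := ρ 0)) h1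
  have hlim : Filter.Tendsto (fun k => Q.prob y (Set.Ici l) + ρ k) Filter.atTop
      (nhds (Q.prob y (Set.Ici l))) := by
    simpa using (tendsto_const_nhds (x := Q.prob y (Set.Ici l))).add hρ0
  exact ge_of_tendsto' hlim hkey

end QuantumProbabilitySpace

end Limit

/-- **Noncommutative weak symmetrization inequality**, first part: if `m` is a median
of the self-adjoint `x` and `x̂ = x ⊗ 1 - 1 ⊗ x`, then for every `λ ∈ ℝ`,
`τ(e_λ^⊥(x - m)) ≤ 2 (τ ⊗ τ)(e_λ^⊥(x̂))`. -/
theorem noncommutative_weak_symmetrization_first {M N : Type*}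
    [CStarAlgebra M] [PartialOrder M] [StarOrderedRing M]
    [CStarAlgebra N] [PartialOrder N] [StarOrderedRing N]
    (Q : QuantumProbabilitySpace M) (R : QuantumProbabilitySpace N)
    (i1 i2 : M →⋆ₐ[ℂ] N) (hts : Q.IsTensorSquare R i1 i2)
    (x : M) (hx : IsSelfAdjoint x) (m : ℝ) (hm : Q.IsMedian x m) (l : ℝ) :
    Q.prob (x - (m : ℂ) • 1) (Set.Ici l) ≤ 2 * R.prob (i1 x - i2 x) (Set.Ici l) := by
  classical
  set x₀ : M := x - (m : ℂ) • 1 with hx₀def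
  have hm1 : IsSelfAdjoint ((m : ℂ) • (1 : M)) := by
    apply IsSelfAdjoint.smul ?_ (IsSelfAdjoint.one M)
    exact Complex.conj_ofReal m
  have hx₀ : IsSelfAdjoint x₀ := hx.sub hm1
  set p' : M := Q.specProj x₀ (Set.Ici l) with hp'def
  set q' : M := Q.specProj x (Set.Iic m) with hq'def
  have hp'sa : IsSelfAdjoint p' := Q.specProj_isSelfAdjoint _ _ hx₀ measurableSet_Ici
  have hp'id : IsIdempotentElem p' := Q.specProj_isIdempotentElem _ _ hx₀ measurableSet_Ici
  have hq'sa : IsSelfAdjoint q' := Q.specProj_isSelfAdjoint _ _ hx measurableSet_Iic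
  have hq'id : IsIdempotentElem q' := Q.specProj_isIdempotentElem _ _ hx measurableSet_Iic
  set P : N := i1 p' with hPdef
  set Qp : N := i2 q' with hQpdef
  set r : N := P * Qp with hrdef
  have hPQ : Commute P Qp := hts.commutes p' q'
  have hPsa : IsSelfAdjoint P := by
    show star P = P
    rw [hPdef, ← map_star, hp'sa.star_eq]
  have hQpsa : IsSelfAdjoint Qp := by
    show star Qp = Qp
    rw [hQpdef, ← map_star, hq'sa.star_eq]
  have hPid : IsIdempotentElem P := by
    show P * P = P
    rw [hPdef, ← map_mul, hp'id.eq]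
  have hQpid : IsIdempotentElem Qp := by
    show Qp * Qp = Qp
    rw [hQpdef, ← map_mul, hq'id.eq]
  have hrsa : IsSelfAdjoint r := by
    show star r = r
    rw [hrdef, star_mul, hPsa.star_eq, hQpsa.star_eq]
    exact hPQ.eq.symm
  have hrid : IsIdempotentElem r := by
    have h1 : Qp * (P * Qp) = P * Qp := by
      rw [← mul_assoc, ← hPQ.eq, mul_assoc, hQpid.eq]
    show P * Qp * (P * Qp) = P * Qp
    rw [mul_assoc, h1, ← mul_assoc, hPid.eq]
  set y : N := i1 x - i2 x with hydef
  have hysa : IsSelfAdjoint y := by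
    show star y = y
    rw [hydef, star_sub, ← map_star, ← map_star, hx.star_eq]
  have hy2 : y = i1 x₀ - i2 x₀ := by
    rw [hydef, hx₀def, map_sub, map_sub, map_smul, map_smul, map_one, map_one,
      sub_sub_sub_cancel_right]
  -- commutation of r with y
  have cA : Commute (i1 x₀) P := (Q.specProj_commute x₀ _ hx₀ measurableSet_Ici).map i1
  have cAQ : Commute (i1 x₀) Qp := hts.commutes x₀ q'
  have cBP : Commute (i2 x₀) P := (hts.commutes p' x₀).symm
  have cxq : Commute x q' := Q.specProj_commute x _ hx measurableSet_Iic
  have cx₀q : Commute x₀ q' := by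
    have hmq : Commute ((m : ℂ) • (1 : M)) q' := by
      show ((m : ℂ) • (1 : M)) * q' = q' * ((m : ℂ) • (1 : M))
      rw [smul_mul_assoc, one_mul, mul_smul_comm, mul_one]
    exact cxq.sub_left hmq
  have cBQ : Commute (i2 x₀) Qp := cx₀q.map i2
  have cyr : y * r = r * y := by
    have c1 : Commute y P := by rw [hy2]; exact cA.sub_left cBP
    have c2 : Commute y Qp := by rw [hy2]; exact cAQ.sub_left cBQ
    exact (c1.mul_right c2).eq
  -- operator inequalities
  have h1 : (l : ℂ) • p' ≤ p' * x₀ * p' := Q.specProj_ge x₀ l hx₀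
  have h2 : q' * x * q' ≤ (m : ℂ) • q' := Q.specProj_le x m hx
  have h2' : q' * x₀ * q' ≤ 0 := by
    have hmid : q' * ((m : ℂ) • (1 : M)) * q' = (m : ℂ) • q' := by
      rw [mul_smul_comm, mul_one, smul_mul_assoc, hq'id.eq]
    have heq : q' * x₀ * q' = q' * x * q' - (m : ℂ) • q' := by
      rw [hx₀def, mul_sub, sub_mul, hmid]
    rw [heq]
    exact sub_nonpos.mpr h2
  have hra : (l : ℂ) • r ≤ r * (i1 x₀) * r := by
    have hmap := StarAlgHomCStar.mono i1 h1
    rw [map_smul] at hmap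
    have hc := star_left_conjugate_le_conjugate hmap Qp
    rw [hQpsa.star_eq, ← hPdef] at hc
    have hL : Qp * ((l : ℂ) • P) * Qp = (l : ℂ) • r := by
      rw [mul_smul_comm, smul_mul_assoc]
      congr 1
      rw [← hPQ.eq, mul_assoc, hQpid.eq, hrdef]
    have hR : Qp * (i1 (p' * x₀ * p')) * Qp = r * (i1 x₀) * r := by
      rw [map_mul, map_mul]
      exact (mul_conj_eq hPQ cAQ hQpid).symm
    rw [hL, hR] at hc
    exact hc
  have hrb : r * (i2 x₀) * r ≤ 0 := by
    have hmap := StarAlgHomCStar.mono i2 h2'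
    rw [map_zero] at hmap
    have hc := star_left_conjugate_le_conjugate hmap P
    rw [hPsa.star_eq, mul_zero, zero_mul] at hc
    have hR : P * (i2 (q' * x₀ * q')) * P = r * (i2 x₀) * r := by
      rw [map_mul, map_mul]
      have hkey := mul_conj_eq (hPQ.symm) cBP hPid
      rw [hrdef, hPQ.eq]
      exact hkey.symm
    rw [hR] at hc
    exact hc
  have hge : (l : ℂ) • r ≤ r * y * r := by
    have hsub := sub_le_sub hra hrb
    rw [sub_zero] at hsub
    calc (l : ℂ) • r ≤ r * (i1 x₀) * r - r * (i2 x₀) * r := hsub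
      _ = r * y * r := by rw [hy2, mul_sub, sub_mul]
  -- trace computation
  have htrace : R.τ r = Q.τ p' * Q.τ q' := hts.trace_mul p' q'
  have hq'pos : (0 : M) ≤ q' := QuantumProbabilitySpace.proj_nonneg hq'sa hq'id
  have hp'pos : (0 : M) ≤ p' := QuantumProbabilitySpace.proj_nonneg hp'sa hp'id
  have hp'im : (Q.τ p').im = 0 := Q.tau_im_zero hp'pos
  have hq'im : (Q.τ q').im = 0 := Q.tau_im_zero hq'pos
  have hrre : (R.τ r).re = (Q.τ p').re * (Q.τ q').re := by
    rw [htrace, Complex.mul_re, hp'im, hq'im]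
    ring
  have hmed : 1 / 2 ≤ (Q.τ q').re := hm.1
  have hp're : 0 ≤ (Q.τ p').re := Q.tau_re_nonneg hp'pos
  have hmain : (R.τ r).re ≤ R.prob y (Set.Ici l) := by
    apply R.le_prob_Ici_of_forall_lt hysa
    intro l' hl'
    exact R.gap_lemma hysa hrsa hrid cyr hl' hge
  calc Q.prob x₀ (Set.Ici l) = (Q.τ p').re := rfl
    _ ≤ 2 * ((Q.τ p').re * (Q.τ q').re) := by nlinarith
    _ = 2 * (R.τ r).re := by rw [hrre]
    _ ≤ 2 * R.prob y (Set.Ici l) := by linarith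
end

section
/- Let x ∈ 𝔐 be self-adjoint with median m, and set x̂ := x ⊗ 1 − 1 ⊗ x in 𝔐 ⊗ 𝔐 with trace τ ⊗ τ. Then for every λ ∈ ℝ and every α ∈ ℝ, τ(e_λ^⊥(|x − m|)) ≤ 2 (τ ⊗ τ)(e_λ^⊥(|x̂|)) ≤ 4 τ(e_{λ/2}^⊥(|x − α|)). In particular, taking α = m, τ(e_λ^⊥(|x − m|)) ≤ 2 (τ ⊗ τ)(e_λ^⊥(|x̂|)) ≤ 4 τ(e_{λ/2}^⊥(|x − m|)). -/
open scoped NNReal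

section Lemmas0
variable {M : Type*} [CStarAlgebra M] [PartialOrder M] [StarOrderedRing M]

namespace NWS

lemma qAbs_eq_cfc_abs (x : M) (hx : IsSelfAdjoint x) : qAbs x = cfc (fun t : ℝ => |t|) x := by
  unfold qAbs
  rw [hx.star_eq]
  refine CFC.sqrt_unique ?_ (cfc_nonneg (fun t _ => abs_nonneg t))
  rw [← cfc_mul ..]
  calc cfc (fun t : ℝ => |t| * |t|) x = cfc (fun t : ℝ => t * t) x := by
        refine cfc_congr (fun t _ => abs_mul_abs_self t)
    _ = x * x := by rw [cfc_mul .., cfc_id' ..]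

lemma shift_eq (x : M) (hx : IsSelfAdjoint x) (a : ℝ) :
    cfc (fun t : ℝ => t - a) x = x - (a : ℂ) • 1 := by
  rw [cfc_sub .., cfc_id' .., cfc_const a x, Algebra.algebraMap_eq_smul_one,
    Complex.coe_smul]

lemma smul_one_sa (x : M) (hx : IsSelfAdjoint x) (a : ℝ) : IsSelfAdjoint (x - (a:ℂ) • 1) := by
  refine hx.sub ?_
  rw [IsSelfAdjoint, star_smul, star_one, Complex.star_def, Complex.conj_ofReal]

end NWS
end Lemmas0
section Lemmas

variable {M : Type*} [CStarAlgebra M] [PartialOrder M] [StarOrderedRing M]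
variable (Q : QuantumProbabilitySpace M)

namespace NWS

/-- a star algebra homomorphism between C*-algebras is order preserving -/
lemma starAlgHom_mono {N : Type*} [CStarAlgebra N] [PartialOrder N] [StarOrderedRing N]
    (i : M →⋆ₐ[ℂ] N) {a b : M} (h : a ≤ b) : i a ≤ i b := by
  have h0 : 0 ≤ b - a := sub_nonneg.mpr h
  have hc : CFC.sqrt (b - a) * CFC.sqrt (b - a) = b - a := CFC.sqrt_mul_sqrt_self _ h0
  have hsa : IsSelfAdjoint (CFC.sqrt (b - a)) := IsSelfAdjoint.of_nonneg (CFC.sqrt_nonneg _)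
  have : i (b - a) = star (i (CFC.sqrt (b - a))) * i (CFC.sqrt (b - a)) := by
    rw [← map_star, ← map_mul, hsa.star_eq, hc]
  have : 0 ≤ i (b - a) := this ▸ star_mul_self_nonneg _
  calc i a ≤ i a + i (b - a) := le_add_of_nonneg_right this
    _ = i b := by rw [← map_add, add_sub_cancel]

lemma tau_re_nonneg {a : M} (ha : 0 ≤ a) : 0 ≤ (Q.τ a).re := (Q.pos a ha).1

lemma tau_im_zero {a : M} (ha : 0 ≤ a) : (Q.τ a).im = 0 := (Q.pos a ha).2

lemma tau_mono {a b : M} (h : a ≤ b) : (Q.τ a).re ≤ (Q.τ b).re := by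
  have := tau_re_nonneg Q (sub_nonneg.mpr h)
  rw [map_sub, Complex.sub_re] at this
  linarith

lemma proj_nonneg {p : M} (hp : IsProjection p) : 0 ≤ p := by
  have : p = star p * p := by rw [hp.1.star_eq, hp.2]
  exact this ▸ star_mul_self_nonneg p

lemma tau_smul_re (l : ℝ) (a : M) : (Q.τ ((l : ℂ) • a)).re = l * (Q.τ a).re := by
  rw [map_smul, smul_eq_mul]
  simp [Complex.ofReal_re, Complex.ofReal_im, Complex.mul_re]

lemma tau_cyclic (a b c : M) : Q.τ (a * b * c) = Q.τ (c * a * b) := by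
  rw [Q.tracial (a * b) c, mul_assoc]

lemma tau_eq_zero_of_re {a : M} (ha : 0 ≤ a) (h : (Q.τ a).re = 0) : a = 0 := by
  refine Q.faithful a ha (Complex.ext h ?_)
  · exact tau_im_zero Q ha

/-- orthogonality criterion via trace: if the trace of `p a p` vanishes for `a ≥ 0`,
then `a • p`-interactions vanish -/
lemma mul_eq_zero_of_tau_proj {p a : M} (hp : IsProjection p) (hpa : 0 ≤ a)
    (hasa : IsSelfAdjoint a) (h : (Q.τ (p * a * p)).re = 0) : a * p = 0 := by
  have hpos : 0 ≤ p * a * p := by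
    simpa [hp.1.star_eq] using star_left_conjugate_nonneg hpa p
  have h0 : p * a * p = 0 := tau_eq_zero_of_re Q hpos h
  -- p a p = star (sqrt a * p) * (sqrt a * p)
  have hs := CFC.sqrt_mul_sqrt_self a hpa
  have hssa : IsSelfAdjoint (CFC.sqrt a) := IsSelfAdjoint.of_nonneg (CFC.sqrt_nonneg _)
  have key : star (CFC.sqrt a * p) * (CFC.sqrt a * p) = p * a * p := by
    rw [star_mul, hssa.star_eq, hp.1.star_eq]
    calc p * CFC.sqrt a * (CFC.sqrt a * p) = p * (CFC.sqrt a * CFC.sqrt a) * p := by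
          noncomm_ring
      _ = p * a * p := by rw [hs]
  have : CFC.sqrt a * p = 0 := by
    rw [← CStarRing.star_mul_self_eq_zero_iff, key, h0]
  calc a * p = CFC.sqrt a * (CFC.sqrt a * p) := by rw [← mul_assoc, hs]
    _ = 0 := by rw [this, mul_zero]

end NWS

end Lemmas
section Lemmas2
variable {M : Type*} [CStarAlgebra M] [PartialOrder M] [StarOrderedRing M]
variable (Q : QuantumProbabilitySpace M)
namespace NWS

lemma specProj_isProjection {x : M} (hx : IsSelfAdjoint x) {B : Set ℝ}
    (hB : MeasurableSet B) : IsProjection (Q.specProj x B) :=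
  ⟨Q.specProj_isSelfAdjoint x B hx hB, Q.specProj_isIdempotentElem x B hx hB⟩

lemma tau_specProj_empty {x : M} (hx : IsSelfAdjoint x) : Q.τ (Q.specProj x ∅) = 0 := by
  have h := Q.specProj_iUnion x (fun _ => ∅) hx (fun _ => MeasurableSet.empty)
    (fun i j _ => by simp [Function.onFun])
  simp only [Set.iUnion_empty] at h
  have h2 := h.summable.tendsto_atTop_zero
  have h3 : Filter.Tendsto (fun _ : ℕ => Q.τ (Q.specProj x ∅)) Filter.atTop
      (nhds (Q.τ (Q.specProj x ∅))) := tendsto_const_nhds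
  exact tendsto_nhds_unique h3 h2

lemma specProj_empty {x : M} (hx : IsSelfAdjoint x) : Q.specProj x ∅ = 0 := by
  refine Q.faithful _ (proj_nonneg (specProj_isProjection Q hx MeasurableSet.empty)) ?_
  exact tau_specProj_empty Q hx

lemma tau_specProj_union {x : M} (hx : IsSelfAdjoint x) {B C : Set ℝ}
    (hB : MeasurableSet B) (hC : MeasurableSet C) (hd : Disjoint B C) :
    Q.τ (Q.specProj x (B ∪ C)) = Q.τ (Q.specProj x B) + Q.τ (Q.specProj x C) := by
  set f : ℕ → Set ℝ := fun n => if n = 0 then B else if n = 1 then C else ∅ with hf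
  have hmeas : ∀ n, MeasurableSet (f n) := by
    intro n; simp only [hf]
    rcases n with _ | _ | n <;> simp [hB, hC]
  have hdisj : Pairwise (Function.onFun Disjoint f) := by
    intro i j hij
    simp only [Function.onFun, hf]
    rcases i with _ | _ | i <;> rcases j with _ | _ | j <;>
      simp_all [hd, hd.symm, Set.disjoint_empty, Set.empty_disjoint]
  have hU : (⋃ n, f n) = B ∪ C := by
    apply Set.Subset.antisymm
    · refine Set.iUnion_subset fun n => ?_
      simp only [hf]
      rcases n with _ | _ | n <;>
        simp [Set.subset_union_left, Set.subset_union_right, Set.empty_subset]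
    · intro t ht
      rcases ht with ht | ht
      · exact Set.mem_iUnion.mpr ⟨0, by simpa [hf] using ht⟩
      · exact Set.mem_iUnion.mpr ⟨1, by simpa [hf] using ht⟩
  have h := Q.specProj_iUnion x f hx hmeas hdisj
  rw [hU] at h
  have h2 : HasSum (fun n => Q.τ (Q.specProj x (f n)))
      (∑ n ∈ Finset.range 2, Q.τ (Q.specProj x (f n))) := by
    refine hasSum_sum_of_ne_finset_zero fun n hn => ?_
    simp only [hf]
    rcases n with _ | _ | n <;> simp_all [tau_specProj_empty Q hx]
  have := h.unique h2
  rw [this]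
  simp [hf, Finset.sum_range_succ]

lemma prob_nonneg {x : M} (hx : IsSelfAdjoint x) {B : Set ℝ} (hB : MeasurableSet B) :
    0 ≤ Q.prob x B :=
  tau_re_nonneg Q (proj_nonneg (specProj_isProjection Q hx hB))

lemma prob_union {x : M} (hx : IsSelfAdjoint x) {B C : Set ℝ}
    (hB : MeasurableSet B) (hC : MeasurableSet C) (hd : Disjoint B C) :
    Q.prob x (B ∪ C) = Q.prob x B + Q.prob x C := by
  unfold QuantumProbabilitySpace.prob
  rw [tau_specProj_union Q hx hB hC hd, Complex.add_re]

lemma prob_mono {x : M} (hx : IsSelfAdjoint x) {B C : Set ℝ}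
    (hB : MeasurableSet B) (hC : MeasurableSet C) (h : B ⊆ C) :
    Q.prob x B ≤ Q.prob x C := by
  have : C = B ∪ (C \ B) := by rw [Set.union_diff_cancel h]
  rw [this, prob_union Q hx hB (hC.diff hB) Set.disjoint_sdiff_right]
  have := prob_nonneg Q hx (hC.diff hB)
  linarith

lemma prob_univ {x : M} (hx : IsSelfAdjoint x) : Q.prob x Set.univ = 1 := by
  unfold QuantumProbabilitySpace.prob
  rw [Q.specProj_univ x hx, Q.normalized, Complex.one_re]

lemma prob_le_one {x : M} (hx : IsSelfAdjoint x) {B : Set ℝ} (hB : MeasurableSet B) :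
    Q.prob x B ≤ 1 := by
  rw [← prob_univ Q hx]
  exact prob_mono Q hx hB MeasurableSet.univ (Set.subset_univ B)

lemma prob_compl_pair {x : M} (hx : IsSelfAdjoint x) {B C : Set ℝ}
    (hB : MeasurableSet B) (hC : MeasurableSet C) (hd : Disjoint B C)
    (hU : B ∪ C = Set.univ) : Q.prob x B + Q.prob x C = 1 := by
  rw [← prob_union Q hx hB hC hd, hU, prob_univ Q hx]

/-- continuity from below of the spectral distribution -/
lemma prob_tendsto {x : M} (hx : IsSelfAdjoint x) (B : ℕ → Set ℝ)
    (hmeas : ∀ n, MeasurableSet (B n)) (hmono : Monotone B) :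
    Filter.Tendsto (fun n => Q.prob x (B n)) Filter.atTop (nhds (Q.prob x (⋃ n, B n))) := by
  set D : ℕ → Set ℝ := fun n => Nat.rec (B 0) (fun k _ => B (k+1) \ B k) n with hD
  have hD0 : D 0 = B 0 := rfl
  have hDs : ∀ n, D (n+1) = B (n+1) \ B n := fun n => rfl
  have hDsub : ∀ n, D n ⊆ B n := by
    intro n; cases n with
    | zero => exact le_refl _
    | succ k => rw [hDs]; exact Set.diff_subset
  have hDmeas : ∀ n, MeasurableSet (D n) := by
    intro n; cases n with
    | zero => exact hmeas 0
    | succ k => rw [hDs]; exact (hmeas (k+1)).diff (hmeas k)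
  have hBD : ∀ n, B n = B 0 ∪ ⋃ k ∈ Finset.range n, D (k+1) := by
    intro n
    induction n with
    | zero => simp
    | succ k ih =>
      rw [Finset.range_add_one]
      apply Set.Subset.antisymm
      · intro t ht
        by_cases htk : t ∈ B k
        · rw [ih] at htk
          rcases htk with h | h
          · exact Or.inl h
          · refine Or.inr ?_
            simp only [Set.mem_iUnion] at h ⊢
            obtain ⟨j, hj1, hj2⟩ := h
            exact ⟨j, by simp at hj1 ⊢; omega, hj2⟩
        · refine Or.inr ?_
          simp only [Set.mem_iUnion]
          exact ⟨k, by simp, ⟨ht, htk⟩⟩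
      · intro t ht
        rcases ht with h | h
        · exact hmono (Nat.zero_le _) h
        · simp only [Set.mem_iUnion] at h
          obtain ⟨j, hj1, hj2⟩ := h
          simp only [Finset.mem_insert, Finset.mem_range] at hj1
          have : t ∈ B (j+1) := hDsub (j+1) hj2
          exact hmono (by omega : j + 1 ≤ k + 1) this
  have hdisjBD : ∀ n k, n ≤ k → Disjoint (B n) (D (k+1)) := by
    intro n k hnk
    rw [hDs]
    exact Set.disjoint_of_subset (hmono hnk) (le_refl _) disjoint_sdiff_self_right
  have hdisj : Pairwise (Function.onFun Disjoint D) := by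
    have key : ∀ i j, i < j → Disjoint (D i) (D j) := by
      intro i j hij
      obtain ⟨k, rfl⟩ : ∃ k, j = k + 1 := ⟨j - 1, by omega⟩
      exact Set.disjoint_of_subset (hDsub i) (le_refl _)
        (hdisjBD i k (by omega))
    intro i j hij
    rcases lt_or_gt_of_ne hij with h | h
    · exact key i j h
    · exact (key j i h).symm
  have hUD : (⋃ n, D n) = ⋃ n, B n := by
    apply Set.Subset.antisymm
    · exact Set.iUnion_mono hDsub
    · refine Set.iUnion_subset fun n => ?_
      intro t ht
      rw [hBD n] at ht
      rcases ht with h | h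
      · exact Set.mem_iUnion.mpr ⟨0, h⟩
      · simp only [Set.mem_iUnion] at h
        obtain ⟨j, _, hj⟩ := h
        exact Set.mem_iUnion.mpr ⟨j+1, hj⟩
  have hsum := Q.specProj_iUnion x D hx hDmeas hdisj
  rw [hUD] at hsum
  have htend := hsum.tendsto_sum_nat
  -- partial sums equal B n probabilities
  have hpart : ∀ n, (∑ k ∈ Finset.range (n+1), Q.τ (Q.specProj x (D k))) =
      Q.τ (Q.specProj x (B n)) := by
    intro n
    induction n with
    | zero => simp [hD0]
    | succ k ih =>
      rw [Finset.sum_range_succ, ih]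
      have : B (k+1) = B k ∪ D (k+1) := by
        rw [hDs, Set.union_diff_cancel (hmono (by omega : k ≤ k + 1))]
      rw [this, tau_specProj_union Q hx (hmeas k) (hDmeas (k+1)) (hdisjBD k k le_rfl)]
  have htend2 : Filter.Tendsto (fun n => Q.τ (Q.specProj x (B n))) Filter.atTop
      (nhds (Q.τ (Q.specProj x (⋃ n, B n)))) := by
    have := htend.comp (Filter.tendsto_add_atTop_nat 1)
    refine Filter.Tendsto.congr (fun n => ?_) this
    exact hpart n
  have := (Complex.continuous_re.tendsto _).comp htend2
  exact this

end NWS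
end Lemmas2
section Lemmas3
variable {M : Type*} [CStarAlgebra M] [PartialOrder M] [StarOrderedRing M]
variable (Q : QuantumProbabilitySpace M)
namespace NWS

lemma isProjection_one_sub {p : M} (hp : IsProjection p) : IsProjection (1 - p) := by
  constructor
  · exact (IsSelfAdjoint.one M).sub hp.1
  · unfold IsIdempotentElem
    have hexp : (1 - p) * (1 - p) = 1 - p - p + p * p := by noncomm_ring
    rw [hexp, hp.2]
    abel

lemma proj_tau_le_one {p : M} (hp : IsProjection p) : (Q.τ p).re ≤ 1 := by
  have h0 := tau_re_nonneg Q (proj_nonneg (isProjection_one_sub hp))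
  rw [map_sub, Q.normalized, Complex.sub_re, Complex.one_re] at h0
  linarith

lemma tau_three_orth {p q g : M} (hp : IsProjection p) (hq : IsProjection q)
    (hg : IsProjection g) (hpq : p * q = 0) (hpg : p * g = 0) (hqg : q * g = 0) :
    (Q.τ p).re + (Q.τ q).re + (Q.τ g).re ≤ 1 := by
  have hqp : q * p = 0 := by
    have := congrArg star hpq
    rwa [star_mul, hp.1.star_eq, hq.1.star_eq, star_zero] at this
  have hgp : g * p = 0 := by
    have := congrArg star hpg
    rwa [star_mul, hp.1.star_eq, hg.1.star_eq, star_zero] at this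
  have hgq : g * q = 0 := by
    have := congrArg star hqg
    rwa [star_mul, hq.1.star_eq, hg.1.star_eq, star_zero] at this
  have hproj : IsProjection (p + q + g) := by
    constructor
    · exact (hp.1.add hq.1).add hg.1
    · unfold IsIdempotentElem
      have hexp : (p + q + g) * (p + q + g) =
          p * p + q * q + g * g + (p * q + q * p) + (p * g + g * p) + (q * g + g * q) := by
        noncomm_ring
      rw [hexp, hp.2, hq.2, hg.2, hpq, hqp, hpg, hgp, hqg, hgq]
      simp
  have := proj_tau_le_one Q hproj
  rw [map_add, map_add, Complex.add_re, Complex.add_re] at this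
  linarith

/-- **core orthogonality lemma**: if `g` is a projection commuting with `y` such that
`y g ≤ b g` with `b < l`, then `g` is orthogonal to the spectral projection of `y`
on `[l, ∞)`. -/
lemma orth_of_corner_lt {y g : M} (hy : IsSelfAdjoint y) (hg : IsProjection g)
    (hcomm : y * g = g * y) {b l : ℝ} (hbl : b < l) (hle : y * g ≤ (b : ℂ) • g) :
    Q.specProj y (Set.Ici l) * g = 0 := by
  set f := Q.specProj y (Set.Ici l) with hfdef
  have hfproj : IsProjection f := specProj_isProjection Q hy measurableSet_Ici
  have hfy : y * f = f * y := (Q.specProj_commute y (Set.Ici l) hy measurableSet_Ici).eq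
  have hfyf : (l : ℂ) • f ≤ f * y * f := Q.specProj_ge y l hy
  set c := f * y * f - (l : ℂ) • f with hcdef
  have hc0 : 0 ≤ c := sub_nonneg.mpr hfyf
  have hfc : f * c = c := by
    rw [hcdef, mul_sub]
    have h1 : f * (f * y * f) = f * y * f := by
      rw [← mul_assoc, ← mul_assoc, hfproj.2]
    have h2 : f * ((l : ℂ) • f) = (l : ℂ) • f := by
      rw [mul_smul_comm, hfproj.2]
    rw [h1, h2]
  set s := (Q.τ (f * g * f)).re with hsdef
  have hs0 : 0 ≤ s := by
    have : 0 ≤ f * g * f := by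
      simpa [hfproj.1.star_eq] using star_left_conjugate_nonneg (proj_nonneg hg) f
    exact tau_re_nonneg Q this
  -- the element y * (f * g * f), evaluated two ways
  have hyf : y * f = f * y * f := by
    rw [← hfy, mul_assoc, hfproj.2]
  have expand : y * (f * g * f) = c * (g * f) + (l : ℂ) • (f * g * f) := by
    have : y * (f * g * f) = (f * y * f) * (g * f) := by
      rw [← hyf]; noncomm_ring
    rw [this, hcdef]
    noncomm_ring
  have lower : l * s ≤ (Q.τ (y * (f * g * f))).re := by
    have hcgf : (Q.τ (c * (g * f))).re = (Q.τ (c * g)).re := by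
      have h1 : c * (g * f) = c * g * f := by noncomm_ring
      have h2 : Q.τ (c * g * f) = Q.τ (f * c * g) := (tau_cyclic Q c g f).symm ▸ rfl
      rw [h1, tau_cyclic Q c g f]
      have : f * c * g = c * g := by rw [hfc]
      rw [this]
    have hcg : 0 ≤ (Q.τ (c * g)).re := by
      have h1 : Q.τ (c * g) = Q.τ (g * c * g) := by
        have : c * g = c * g * g := by rw [mul_assoc, hg.2]
        rw [this, Q.tracial (c * g) g, ← mul_assoc]
      rw [h1]
      refine tau_re_nonneg Q ?_
      simpa [hg.1.star_eq] using star_left_conjugate_nonneg hc0 g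
    rw [expand, map_add, Complex.add_re, tau_smul_re]
    rw [hsdef]
    have := hcgf ▸ hcg
    linarith
  have upper : (Q.τ (y * (f * g * f))).re ≤ b * s := by
    have heq : y * (f * g * f) = f * (y * g) * f := by
      have : y * f = f * y := hfy
      calc y * (f * g * f) = (y * f) * g * f := by noncomm_ring
        _ = (f * y) * g * f := by rw [this]
        _ = f * (y * g) * f := by noncomm_ring
    have hle2 : f * (y * g) * f ≤ f * ((b : ℂ) • g) * f := by
      have := star_left_conjugate_le_conjugate hle f
      rwa [hfproj.1.star_eq] at this
    have hr : f * ((b : ℂ) • g) * f = (b : ℂ) • (f * g * f) := by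
      rw [mul_smul_comm, smul_mul_assoc]
    rw [heq]
    calc (Q.τ (f * (y * g) * f)).re ≤ (Q.τ (f * ((b : ℂ) • g) * f)).re :=
          tau_mono Q hle2
      _ = b * s := by rw [hr, tau_smul_re]
  have hs_zero : s = 0 := by nlinarith
  have hgf : g * f = 0 :=
    mul_eq_zero_of_tau_proj Q hfproj (proj_nonneg hg) hg.1 hs_zero
  have := congrArg star hgf
  rwa [star_mul, hfproj.1.star_eq, hg.1.star_eq, star_zero] at this

lemma specProj_neg {y : M} (hy : IsSelfAdjoint y) {B : Set ℝ} (hB : MeasurableSet B) :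
    Q.specProj (-y) B = Q.specProj y ((fun t : ℝ => -t) ⁻¹' B) := by
  have hneg : cfc (fun t : ℝ => -t) y = -y := by rw [cfc_neg .., cfc_id' ..]
  rw [← hneg]
  exact Q.specProj_cfc y (fun t => -t) B hy continuous_neg hB

lemma orth_of_corner_gt {y g : M} (hy : IsSelfAdjoint y) (hg : IsProjection g)
    (hcomm : y * g = g * y) {b l : ℝ} (hbl : l < b) (hge : (b : ℂ) • g ≤ y * g) :
    Q.specProj y (Set.Iic l) * g = 0 := by
  have h1 : (-y) * g ≤ ((-b : ℝ) : ℂ) • g := by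
    have hsm : ((-b : ℝ) : ℂ) • g = -((b : ℂ) • g) := by push_cast; rw [neg_smul]
    have := neg_le_neg hge
    rw [← neg_mul] at this
    rwa [hsm]
  have h2 : (-y) * g = g * (-y) := by rw [neg_mul, mul_neg, hcomm]
  have h3 := orth_of_corner_lt Q hy.neg hg h2 (by linarith : (-b : ℝ) < -l) h1
  rwa [specProj_neg Q hy measurableSet_Ici,
    (by ext t; simp [neg_le_neg_iff] : (fun t : ℝ => -t) ⁻¹' Set.Ici (-l) = Set.Iic l)] at h3

end NWS
end Lemmas3
section Lemmas4
variable {M : Type*} [CStarAlgebra M] [PartialOrder M] [StarOrderedRing M]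
variable (Q : QuantumProbabilitySpace M)
namespace NWS

lemma isProjection_zero : IsProjection (0 : M) :=
  ⟨by simp [IsSelfAdjoint], by simp [IsIdempotentElem]⟩

lemma tau_two_orth {p q : M} (hp : IsProjection p) (hq : IsProjection q)
    (hpq : p * q = 0) : (Q.τ p).re + (Q.τ q).re ≤ 1 := by
  have := tau_three_orth Q hp hq (isProjection_zero (M := M)) hpq (by simp) (by simp)
  simpa using this

lemma Iic_iUnion_eq_Iio (l : ℝ) : (⋃ n : ℕ, Set.Iic (l - 1/(n+1))) = Set.Iio l := by
  ext t
  simp only [Set.mem_iUnion, Set.mem_Iic, Set.mem_Iio]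
  constructor
  · rintro ⟨n, hn⟩
    have : (0:ℝ) < 1/(n+1) := by positivity
    linarith
  · intro ht
    obtain ⟨n, hn⟩ := exists_nat_one_div_lt (by linarith : (0:ℝ) < l - t)
    exact ⟨n, by linarith⟩

lemma tau_le_prob_Ici {y r : M} (hy : IsSelfAdjoint y) (hr : IsProjection r)
    (hcomm : y * r = r * y) {l : ℝ} (hge : (l : ℂ) • r ≤ y * r) :
    (Q.τ r).re ≤ Q.prob y (Set.Ici l) := by
  have hbnd : ∀ n : ℕ, (Q.τ r).re ≤ 1 - Q.prob y (Set.Iic (l - 1/(n+1))) := by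
    intro n
    have h0 : (0:ℝ) < 1/(n+1) := by positivity
    have horth := orth_of_corner_gt Q hy hr hcomm (by linarith : l - 1/(n+1) < l) hge
    have := tau_two_orth Q (specProj_isProjection Q hy measurableSet_Iic) hr horth
    unfold QuantumProbabilitySpace.prob
    linarith
  have htend : Filter.Tendsto (fun n : ℕ => 1 - Q.prob y (Set.Iic (l - 1/(n+1))))
      Filter.atTop (nhds (1 - Q.prob y (Set.Iio l))) := by
    have hmono : Monotone (fun n : ℕ => Set.Iic (l - 1/((n:ℝ)+1))) := by
      intro n m hnm
      refine Set.Iic_subset_Iic.mpr ?_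
      have : 1/((m:ℝ)+1) ≤ 1/((n:ℝ)+1) := by
        apply one_div_le_one_div_of_le (by positivity)
        have : (n:ℝ) ≤ m := Nat.cast_le.mpr hnm
        linarith
      linarith
    have := prob_tendsto Q hy (fun n : ℕ => Set.Iic (l - 1/((n:ℝ)+1)))
      (fun n => measurableSet_Iic) hmono
    rw [Iic_iUnion_eq_Iio l] at this
    exact (tendsto_const_nhds.sub this)
  have hle := ge_of_tendsto' htend hbnd
  have hcompl : Q.prob y (Set.Iio l) + Q.prob y (Set.Ici l) = 1 :=
    prob_compl_pair Q hy measurableSet_Iio measurableSet_Ici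
      (Set.Iio_disjoint_Ici le_rfl) (Set.Iio_union_Ici)
  linarith

lemma prob_neg {y : M} (hy : IsSelfAdjoint y) {B : Set ℝ} (hB : MeasurableSet B) :
    Q.prob (-y) B = Q.prob y ((fun t : ℝ => -t) ⁻¹' B) := by
  unfold QuantumProbabilitySpace.prob
  rw [specProj_neg Q hy hB]

lemma tau_le_prob_Iic {y r : M} (hy : IsSelfAdjoint y) (hr : IsProjection r)
    (hcomm : y * r = r * y) {l : ℝ} (hle : y * r ≤ (l : ℂ) • r) :
    (Q.τ r).re ≤ Q.prob y (Set.Iic l) := by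
  have h1 : ((-l : ℝ) : ℂ) • r ≤ (-y) * r := by
    have hsm : ((-l : ℝ) : ℂ) • r = -((l : ℂ) • r) := by push_cast; rw [neg_smul]
    rw [hsm, neg_mul]
    exact neg_le_neg hle
  have h2 : (-y) * r = r * (-y) := by rw [neg_mul, mul_neg, hcomm]
  have h3 := tau_le_prob_Ici Q hy.neg hr h2 h1
  rwa [prob_neg Q hy measurableSet_Ici,
    (by ext t; simp [neg_le_neg_iff] : (fun t : ℝ => -t) ⁻¹' Set.Ici (-l) = Set.Iic l)] at h3

lemma abs_preimage_Ici (l : ℝ) :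
    (fun t : ℝ => |t|) ⁻¹' Set.Ici l = Set.Iic (-l) ∪ Set.Ici l := by
  ext t
  simp only [Set.mem_preimage, Set.mem_Ici, Set.mem_union, Set.mem_Iic, le_abs]
  constructor
  · rintro (h | h)
    · exact Or.inr h
    · exact Or.inl (by linarith)
  · rintro (h | h)
    · exact Or.inr (by linarith)
    · exact Or.inl h

lemma specProj_qAbs {z : M} (hz : IsSelfAdjoint z) (l : ℝ) :
    Q.specProj (qAbs z) (Set.Ici l) = Q.specProj z (Set.Iic (-l) ∪ Set.Ici l) := by
  rw [qAbs_eq_cfc_abs z hz,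
    Q.specProj_cfc z (fun t => |t|) (Set.Ici l) hz continuous_abs measurableSet_Ici,
    abs_preimage_Ici]

lemma specProj_shift {x : M} (hx : IsSelfAdjoint x) (a : ℝ) {B : Set ℝ}
    (hB : MeasurableSet B) :
    Q.specProj (x - (a : ℂ) • 1) B = Q.specProj x ((fun t : ℝ => t - a) ⁻¹' B) := by
  rw [← shift_eq x hx a]
  exact Q.specProj_cfc x (fun t => t - a) B hx (continuous_id.sub continuous_const) hB

lemma prob_qAbs_shift {x : M} (hx : IsSelfAdjoint x) (a l : ℝ) :
    Q.prob (qAbs (x - (a : ℂ) • 1)) (Set.Ici l) =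
      Q.prob x (Set.Iic (a - l) ∪ Set.Ici (a + l)) := by
  have hset : ((fun t : ℝ => t - a) ⁻¹' (Set.Iic (-l) ∪ Set.Ici l)) =
      Set.Iic (a - l) ∪ Set.Ici (a + l) := by
    ext t
    simp only [Set.mem_preimage, Set.mem_union, Set.mem_Iic, Set.mem_Ici]
    constructor
    · rintro (h | h)
      · exact Or.inl (by linarith)
      · exact Or.inr (by linarith)
    · rintro (h | h)
      · exact Or.inl (by linarith)
      · exact Or.inr (by linarith)
  unfold QuantumProbabilitySpace.prob
  rw [specProj_qAbs Q (smul_one_sa x hx a) l,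
    specProj_shift Q hx a ((measurableSet_Iic).union measurableSet_Ici), hset]

lemma prob_qAbs {z : M} (hz : IsSelfAdjoint z) (l : ℝ) :
    Q.prob (qAbs z) (Set.Ici l) = Q.prob z (Set.Iic (-l) ∪ Set.Ici l) := by
  unfold QuantumProbabilitySpace.prob
  rw [specProj_qAbs Q hz l]

end NWS
end Lemmas4
section Lemmas5
variable {M : Type*} [CStarAlgebra M] [PartialOrder M] [StarOrderedRing M]
variable (Q : QuantumProbabilitySpace M)
namespace NWS

lemma mul_nonneg_of_commute_proj {c q : M} (hc : 0 ≤ c) (hq : IsProjection q)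
    (hcomm : c * q = q * c) : 0 ≤ c * q := by
  have h1 : q * c * q = c * q := by
    rw [← hcomm, mul_assoc, hq.2]
  have := star_left_conjugate_nonneg hc q
  rwa [hq.1.star_eq, h1] at this

lemma smul_mul_le {a p q : M} {t : ℝ} (hq : IsProjection q) (h : (t:ℂ) • p ≤ a)
    (ha : a * q = q * a) (hp : p * q = q * p) : (t:ℂ) • (p * q) ≤ a * q := by
  have hcomm : (a - (t:ℂ) • p) * q = q * (a - (t:ℂ) • p) := by
    rw [sub_mul, mul_sub, ha, smul_mul_assoc, hp, mul_smul_comm]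
  have h0 := mul_nonneg_of_commute_proj (sub_nonneg.mpr h) hq hcomm
  rw [sub_mul, smul_mul_assoc] at h0
  exact sub_nonneg.mp h0

lemma mul_le_smul {a p q : M} {t : ℝ} (hq : IsProjection q) (h : a ≤ (t:ℂ) • p)
    (ha : a * q = q * a) (hp : p * q = q * p) : a * q ≤ (t:ℂ) • (p * q) := by
  have hcomm : ((t:ℂ) • p - a) * q = q * ((t:ℂ) • p - a) := by
    rw [sub_mul, mul_sub, ha, smul_mul_assoc, hp, mul_smul_comm]
  have h0 := mul_nonneg_of_commute_proj (sub_nonneg.mpr h) hq hcomm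
  rw [sub_mul, smul_mul_assoc] at h0
  exact sub_nonneg.mp h0

lemma x_mul_specProj_Iic_le {x : M} (hx : IsSelfAdjoint x) (t : ℝ) :
    x * Q.specProj x (Set.Iic t) ≤ (t:ℂ) • Q.specProj x (Set.Iic t) := by
  set e := Q.specProj x (Set.Iic t) with he
  have hcm : x * e = e * x := (Q.specProj_commute x _ hx measurableSet_Iic).eq
  have hidem : e * e = e := Q.specProj_isIdempotentElem x _ hx measurableSet_Iic
  have h := Q.specProj_le x t hx
  have : e * x * e = x * e := by
    rw [← hcm, mul_assoc, hidem]
  rwa [this] at h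

lemma specProj_Ici_smul_le {x : M} (hx : IsSelfAdjoint x) (t : ℝ) :
    (t:ℂ) • Q.specProj x (Set.Ici t) ≤ x * Q.specProj x (Set.Ici t) := by
  set e := Q.specProj x (Set.Ici t) with he
  have hcm : x * e = e * x := (Q.specProj_commute x _ hx measurableSet_Ici).eq
  have hidem : e * e = e := Q.specProj_isIdempotentElem x _ hx measurableSet_Ici
  have h := Q.specProj_ge x t hx
  have : e * x * e = x * e := by
    rw [← hcm, mul_assoc, hidem]
  rwa [this] at h

/-- corner estimates for `Icc` spectral projections -/
lemma specProj_Icc_corner {x : M} (hx : IsSelfAdjoint x) (u v : ℝ) :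
    (u:ℂ) • Q.specProj x (Set.Icc u v) ≤ x * Q.specProj x (Set.Icc u v) ∧
      x * Q.specProj x (Set.Icc u v) ≤ (v:ℂ) • Q.specProj x (Set.Icc u v) := by
  set c := Q.specProj x (Set.Icc u v) with hcdef
  have hcproj : IsProjection c := specProj_isProjection Q hx measurableSet_Icc
  have hcx : x * c = c * x := (Q.specProj_commute x _ hx measurableSet_Icc).eq
  constructor
  · -- lower bound via Ici u
    set e := Q.specProj x (Set.Ici u) with hedef
    have hce : c * e = c := by
      rw [hcdef, hedef, ← Q.specProj_inter x _ _ hx measurableSet_Icc measurableSet_Ici,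
        Set.inter_eq_left.mpr (fun s hs => hs.1)]
    have hec : e * c = c := by
      rw [hcdef, hedef, ← Q.specProj_inter x _ _ hx measurableSet_Ici measurableSet_Icc,
        Set.inter_eq_right.mpr (fun s hs => hs.1)]
    have h := star_left_conjugate_le_conjugate (Q.specProj_ge x u hx) c
    rw [hcproj.1.star_eq] at h
    have hL : c * ((u:ℂ) • e) * c = (u:ℂ) • c := by
      rw [mul_smul_comm, smul_mul_assoc, hce, hcproj.2]
    have hR : c * (e * x * e) * c = x * c := by
      calc c * (e * x * e) * c = ((c * e) * x) * (e * c) := by noncomm_ring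
        _ = (c * x) * c := by rw [hce, hec]
        _ = x * c := by rw [← hcx, mul_assoc, hcproj.2]
    rw [hL, hR] at h
    exact h
  · set e := Q.specProj x (Set.Iic v) with hedef
    have hce : c * e = c := by
      rw [hcdef, hedef, ← Q.specProj_inter x _ _ hx measurableSet_Icc measurableSet_Iic,
        Set.inter_eq_left.mpr (fun s hs => hs.2)]
    have hec : e * c = c := by
      rw [hcdef, hedef, ← Q.specProj_inter x _ _ hx measurableSet_Iic measurableSet_Icc,
        Set.inter_eq_right.mpr (fun s hs => hs.2)]
    have h := star_left_conjugate_le_conjugate (Q.specProj_le x v hx) c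
    rw [hcproj.1.star_eq] at h
    have hL : c * ((v:ℂ) • e) * c = (v:ℂ) • c := by
      rw [mul_smul_comm, smul_mul_assoc, hce, hcproj.2]
    have hR : c * (e * x * e) * c = x * c := by
      calc c * (e * x * e) * c = ((c * e) * x) * (e * c) := by noncomm_ring
        _ = (c * x) * c := by rw [hce, hec]
        _ = x * c := by rw [← hcx, mul_assoc, hcproj.2]
    rw [hL, hR] at h
    exact h

variable {N : Type*} [CStarAlgebra N] [PartialOrder N] [StarOrderedRing N]

lemma map_isProjection (i : M →⋆ₐ[ℂ] N) {P : M} (hP : IsProjection P) :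
    IsProjection (i P) := by
  constructor
  · rw [IsSelfAdjoint, ← map_star, hP.1.star_eq]
  · unfold IsIdempotentElem
    rw [← map_mul, hP.2]

lemma tensor_isProjection {Q : QuantumProbabilitySpace M} {R : QuantumProbabilitySpace N}
    {i1 i2 : M →⋆ₐ[ℂ] N} (hts : Q.IsTensorSquare R i1 i2)
    {P P' : M} (hP : IsProjection P) (hP' : IsProjection P') :
    IsProjection (i1 P * i2 P') := by
  have hcm : i1 P * i2 P' = i2 P' * i1 P := (hts.commutes P P').eq
  constructor
  · rw [IsSelfAdjoint, star_mul, ← map_star, ← map_star, hP.1.star_eq, hP'.1.star_eq, ← hcm]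
  · unfold IsIdempotentElem
    calc i1 P * i2 P' * (i1 P * i2 P') = i1 P * (i2 P' * i1 P) * i2 P' := by noncomm_ring
      _ = (i1 P * i1 P) * (i2 P' * i2 P') := by rw [← hcm]; noncomm_ring
      _ = i1 P * i2 P' := by rw [← map_mul, ← map_mul, hP.2, hP'.2]

lemma tensor_tau_re {Q : QuantumProbabilitySpace M} {R : QuantumProbabilitySpace N}
    {i1 i2 : M →⋆ₐ[ℂ] N} (hts : Q.IsTensorSquare R i1 i2)
    {P P' : M} (hP : 0 ≤ P) (hP' : 0 ≤ P') :
    (R.τ (i1 P * i2 P')).re = (Q.τ P).re * (Q.τ P').re := by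
  rw [hts.trace_mul P P', Complex.mul_re, tau_im_zero Q hP, tau_im_zero Q hP']
  ring

end NWS
end Lemmas5
section Lemmas6
variable {M N : Type*} [CStarAlgebra M] [PartialOrder M] [StarOrderedRing M]
    [CStarAlgebra N] [PartialOrder N] [StarOrderedRing N]

namespace NWS

lemma qAbs_sa (z : M) : IsSelfAdjoint (qAbs z) :=
  IsSelfAdjoint.of_nonneg (CFC.sqrt_nonneg _)

lemma commute_i1x_i1P {Q : QuantumProbabilitySpace M} {R : QuantumProbabilitySpace N}
    {i1 i2 : M →⋆ₐ[ℂ] N} (hts : Q.IsTensorSquare R i1 i2) {x P : M}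
    (h : x * P = P * x) : Commute (i1 x) (i1 P) := by
  unfold Commute SemiconjBy
  rw [← map_mul, ← map_mul, h]

lemma commute_i2x_i2P {Q : QuantumProbabilitySpace M} {R : QuantumProbabilitySpace N}
    {i1 i2 : M →⋆ₐ[ℂ] N} (hts : Q.IsTensorSquare R i1 i2) {x P : M}
    (h : x * P = P * x) : Commute (i2 x) (i2 P) := by
  unfold Commute SemiconjBy
  rw [← map_mul, ← map_mul, h]

lemma commute_y_tensor {Q : QuantumProbabilitySpace M} {R : QuantumProbabilitySpace N}
    {i1 i2 : M →⋆ₐ[ℂ] N} (hts : Q.IsTensorSquare R i1 i2) {x P P' : M}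
    (hxP : x * P = P * x) (hxP' : x * P' = P' * x) :
    Commute (i1 x - i2 x) (i1 P * i2 P') := by
  have c1 : Commute (i1 x) (i1 P) := commute_i1x_i1P hts hxP
  have c2 : Commute (i1 x) (i2 P') := hts.commutes x P'
  have c3 : Commute (i2 x) (i1 P) := (hts.commutes P x).symm
  have c4 : Commute (i2 x) (i2 P') := commute_i2x_i2P hts hxP'
  exact (c1.mul_right c2).sub_left (c3.mul_right c4)

/-- the two-sided corner bound in the tensor square: if `u • c ≤ x c ≤ v • c`
then `u • g ≤ (i1 x - i2 x) g`-type bounds hold for `g = i1 c * i2 c'`. -/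
lemma tensor_bound_fst {Q : QuantumProbabilitySpace M} {R : QuantumProbabilitySpace N}
    {i1 i2 : M →⋆ₐ[ℂ] N} (hts : Q.IsTensorSquare R i1 i2) {x P P' : M} {t : ℝ}
    (hP : IsProjection P) (hP' : IsProjection P') (hxP : x * P = P * x)
    (h : (t : ℂ) • P ≤ x * P) :
    (t : ℂ) • (i1 P * i2 P') ≤ i1 x * (i1 P * i2 P') := by
  have h1 : (t : ℂ) • (i1 P) ≤ i1 x * i1 P := by
    have := starAlgHom_mono i1 h
    rwa [map_smul, map_mul] at this
  have hq : IsProjection (i2 P') := map_isProjection i2 hP'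
  have ha : (i1 x * i1 P) * i2 P' = i2 P' * (i1 x * i1 P) :=
    (((hts.commutes x P').mul_left (hts.commutes P P')).eq)
  have hp : i1 P * i2 P' = i2 P' * i1 P := (hts.commutes P P').eq
  have := smul_mul_le hq h1 ha hp
  rwa [mul_assoc] at this

lemma tensor_bound_fst' {Q : QuantumProbabilitySpace M} {R : QuantumProbabilitySpace N}
    {i1 i2 : M →⋆ₐ[ℂ] N} (hts : Q.IsTensorSquare R i1 i2) {x P P' : M} {t : ℝ}
    (hP : IsProjection P) (hP' : IsProjection P') (hxP : x * P = P * x)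
    (h : x * P ≤ (t : ℂ) • P) :
    i1 x * (i1 P * i2 P') ≤ (t : ℂ) • (i1 P * i2 P') := by
  have h1 : i1 x * i1 P ≤ (t : ℂ) • (i1 P) := by
    have := starAlgHom_mono i1 h
    rwa [map_smul, map_mul] at this
  have hq : IsProjection (i2 P') := map_isProjection i2 hP'
  have ha : (i1 x * i1 P) * i2 P' = i2 P' * (i1 x * i1 P) :=
    (((hts.commutes x P').mul_left (hts.commutes P P')).eq)
  have hp : i1 P * i2 P' = i2 P' * i1 P := (hts.commutes P P').eq
  have := mul_le_smul hq h1 ha hp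
  rwa [mul_assoc] at this

lemma tensor_bound_snd {Q : QuantumProbabilitySpace M} {R : QuantumProbabilitySpace N}
    {i1 i2 : M →⋆ₐ[ℂ] N} (hts : Q.IsTensorSquare R i1 i2) {x P P' : M} {t : ℝ}
    (hP : IsProjection P) (hP' : IsProjection P') (hxP' : x * P' = P' * x)
    (h : (t : ℂ) • P' ≤ x * P') :
    (t : ℂ) • (i1 P * i2 P') ≤ i2 x * (i1 P * i2 P') := by
  have h1 : (t : ℂ) • (i2 P') ≤ i2 x * i2 P' := by
    have := starAlgHom_mono i2 h
    rwa [map_smul, map_mul] at this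
  have hq : IsProjection (i1 P) := map_isProjection i1 hP
  have ha : (i2 x * i2 P') * i1 P = i1 P * (i2 x * i2 P') :=
    (((hts.commutes P x).symm.mul_left ((hts.commutes P P').symm)).eq)
  have hp : i2 P' * i1 P = i1 P * i2 P' := ((hts.commutes P P').symm).eq
  have h2 := smul_mul_le hq h1 ha hp
  -- h2 : t • (i2 P' * i1 P) ≤ (i2 x * i2 P') * i1 P
  have hre : i2 x * (i1 P * i2 P') = (i2 x * i2 P') * i1 P := by
    calc i2 x * (i1 P * i2 P') = (i2 x * i1 P) * i2 P' := by rw [mul_assoc]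
      _ = (i1 P * i2 x) * i2 P' := by rw [((hts.commutes P x).symm.eq)]
      _ = i1 P * (i2 x * i2 P') := by rw [mul_assoc]
      _ = (i2 x * i2 P') * i1 P := ha.symm
  rw [hre, ← hp]
  exact h2

lemma tensor_bound_snd' {Q : QuantumProbabilitySpace M} {R : QuantumProbabilitySpace N}
    {i1 i2 : M →⋆ₐ[ℂ] N} (hts : Q.IsTensorSquare R i1 i2) {x P P' : M} {t : ℝ}
    (hP : IsProjection P) (hP' : IsProjection P') (hxP' : x * P' = P' * x)
    (h : x * P' ≤ (t : ℂ) • P') :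
    i2 x * (i1 P * i2 P') ≤ (t : ℂ) • (i1 P * i2 P') := by
  have h1 : i2 x * i2 P' ≤ (t : ℂ) • (i2 P') := by
    have := starAlgHom_mono i2 h
    rwa [map_smul, map_mul] at this
  have hq : IsProjection (i1 P) := map_isProjection i1 hP
  have ha : (i2 x * i2 P') * i1 P = i1 P * (i2 x * i2 P') :=
    (((hts.commutes P x).symm.mul_left ((hts.commutes P P').symm)).eq)
  have hp : i2 P' * i1 P = i1 P * i2 P' := ((hts.commutes P P').symm).eq
  have h2 := mul_le_smul hq h1 ha hp
  have hre : i2 x * (i1 P * i2 P') = (i2 x * i2 P') * i1 P := by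
    calc i2 x * (i1 P * i2 P') = (i2 x * i1 P) * i2 P' := by rw [mul_assoc]
      _ = (i1 P * i2 x) * i2 P' := by rw [((hts.commutes P x).symm.eq)]
      _ = i1 P * (i2 x * i2 P') := by rw [mul_assoc]
      _ = (i2 x * i2 P') * i1 P := ha.symm
  rw [hre, ← hp]
  exact h2

lemma sub_le_smul_sub {y1 y2 r : N} {s t : ℝ} (h1 : (s : ℂ) • r ≤ y1) (h2 : y2 ≤ (t : ℂ) • r) :
    ((s - t : ℝ) : ℂ) • r ≤ y1 - y2 := by
  have := sub_le_sub h1 h2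
  rwa [← sub_smul, (by push_cast; ring : (s : ℂ) - (t : ℂ) = ((s - t : ℝ) : ℂ))] at this

lemma smul_sub_le_sub {y1 y2 r : N} {s t : ℝ} (h1 : y1 ≤ (s : ℂ) • r) (h2 : (t : ℂ) • r ≤ y2) :
    y1 - y2 ≤ ((s - t : ℝ) : ℂ) • r := by
  have := sub_le_sub h1 h2
  rwa [← sub_smul, (by push_cast; ring : (s : ℂ) - (t : ℂ) = ((s - t : ℝ) : ℂ))] at this

end NWS
end Lemmas6

open NWS

/-- **Noncommutative weak symmetrization inequality**: if `m` is a median of the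
self-adjoint `x` and `x̂ = x ⊗ 1 - 1 ⊗ x`, then for every `λ ∈ ℝ` and `α ∈ ℝ`,
`τ(e_λ^⊥(|x - m|)) ≤ 2 (τ ⊗ τ)(e_λ^⊥(|x̂|)) ≤ 4 τ(e_{λ/2}^⊥(|x - α|))`; in particular
(taking `α = m`), `τ(e_λ^⊥(|x - m|)) ≤ 2 (τ ⊗ τ)(e_λ^⊥(|x̂|)) ≤ 4 τ(e_{λ/2}^⊥(|x - m|))`. -/
theorem noncommutative_weak_symmetrization {M N : Type*}
    [CStarAlgebra M] [PartialOrder M] [StarOrderedRing M]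
    [CStarAlgebra N] [PartialOrder N] [StarOrderedRing N]
    (Q : QuantumProbabilitySpace M) (R : QuantumProbabilitySpace N)
    (i1 i2 : M →⋆ₐ[ℂ] N) (hts : Q.IsTensorSquare R i1 i2)
    (x : M) (hx : IsSelfAdjoint x) (m : ℝ) (hm : Q.IsMedian x m) (l : ℝ) :
    Q.prob (qAbs (x - (m : ℂ) • 1)) (Set.Ici l) ≤
        2 * R.prob (qAbs (i1 x - i2 x)) (Set.Ici l) ∧
      (∀ a : ℝ, 2 * R.prob (qAbs (i1 x - i2 x)) (Set.Ici l) ≤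
        4 * Q.prob (qAbs (x - (a : ℂ) • 1)) (Set.Ici (l / 2))) ∧
      2 * R.prob (qAbs (i1 x - i2 x)) (Set.Ici l) ≤
        4 * Q.prob (qAbs (x - (m : ℂ) • 1)) (Set.Ici (l / 2)) := by
  have hy : IsSelfAdjoint (i1 x - i2 x) := by
    rw [IsSelfAdjoint, star_sub, ← map_star, ← map_star, hx.star_eq]
  set y := i1 x - i2 x with hydef
  have hprob_y : R.prob (qAbs y) (Set.Ici l) = R.prob y (Set.Iic (-l) ∪ Set.Ici l) :=
    prob_qAbs R hy l
  -- PART 2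
  have hpart2 : ∀ a : ℝ, R.prob (qAbs y) (Set.Ici l) ≤
      2 * Q.prob (qAbs (x - (a : ℂ) • 1)) (Set.Ici (l / 2)) := by
    intro a
    rw [prob_qAbs_shift Q hx a (l/2)]
    rcases le_or_gt l 0 with hl | hl
    · -- trivial case
      have h1 : R.prob (qAbs y) (Set.Ici l) ≤ 1 :=
        prob_le_one R (qAbs_sa y) measurableSet_Ici
      have hset : Set.Iic (a - l/2) ∪ Set.Ici (a + l/2) = Set.univ := by
        ext t
        simp only [Set.mem_union, Set.mem_Iic, Set.mem_Ici, Set.mem_univ, iff_true]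
        rcases le_total t (a + l/2) with h | h
        · exact Or.inl (by linarith)
        · exact Or.inr h
      rw [hset, prob_univ Q hx]
      linarith
    · -- main case
      rw [hprob_y]
      set u0 := a - l/2 with hu0
      set v0 := a + l/2 with hv0
      set ee : ℕ → ℝ := fun n => (l/2) / ((n:ℝ) + 1) with heedef
      have hee_pos : ∀ n : ℕ, 0 < ee n := by
        intro n; apply div_pos (by linarith) (by positivity)
      have hee_le : ∀ n : ℕ, ee n ≤ l/2 := by
        intro n
        rw [heedef]
        rw [div_le_iff₀ (by positivity)]
        nlinarith [(n.cast_nonneg : (0:ℝ) ≤ (n:ℝ))]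
      have key : ∀ n : ℕ, R.prob y (Set.Iic (-l) ∪ Set.Ici l) ≤
          2 - 2 * Q.prob x (Set.Icc (u0 + ee n) (v0 - ee n)) := by
        intro n
        set u := u0 + ee n with hu
        set v := v0 - ee n with hv
        set c := Q.specProj x (Set.Icc u v) with hcdef
        have hcproj : IsProjection c := specProj_isProjection Q hx measurableSet_Icc
        have hcx : x * c = c * x := (Q.specProj_commute x _ hx measurableSet_Icc).eq
        obtain ⟨hlow, hhigh⟩ := specProj_Icc_corner Q hx u v
        set g := i1 c * i2 c with hgdef
        have hgproj : IsProjection g := tensor_isProjection hts hcproj hcproj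
        have hcomm_yg : y * g = g * y := (commute_y_tensor hts hcx hcx).eq
        -- bounds
        have b1 : (u : ℂ) • g ≤ i1 x * g := tensor_bound_fst hts hcproj hcproj hcx hlow
        have b2 : i1 x * g ≤ (v : ℂ) • g := tensor_bound_fst' hts hcproj hcproj hcx hhigh
        have b3 : (u : ℂ) • g ≤ i2 x * g := tensor_bound_snd hts hcproj hcproj hcx hlow
        have b4 : i2 x * g ≤ (v : ℂ) • g := tensor_bound_snd' hts hcproj hcproj hcx hhigh
        have hyg_up : y * g ≤ ((v - u : ℝ) : ℂ) • g := by
          rw [hydef, sub_mul]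
          exact smul_sub_le_sub b2 b3
        have hyg_lo : ((u - v : ℝ) : ℂ) • g ≤ y * g := by
          rw [hydef, sub_mul]
          exact sub_le_smul_sub b1 b4
        have hvu : v - u = l - 2 * ee n := by rw [hv, hu, hu0, hv0]; ring
        -- orthogonality
        have hf1 : R.specProj y (Set.Ici l) * g = 0 := by
          refine orth_of_corner_lt R hy hgproj hcomm_yg
            (show v - u < l by rw [hvu]; have := hee_pos n; linarith) ?_
          exact hyg_up
        have hf2 : R.specProj y (Set.Iic (-l)) * g = 0 := by
          refine orth_of_corner_gt R hy hgproj hcomm_yg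
            (show -l < u - v by have := hee_pos n; rw [hu, hv, hu0, hv0]; linarith) ?_
          exact hyg_lo
        have hfm : IsProjection (R.specProj y (Set.Iic (-l))) :=
          specProj_isProjection R hy measurableSet_Iic
        have hfp : IsProjection (R.specProj y (Set.Ici l)) :=
          specProj_isProjection R hy measurableSet_Ici
        have hff : R.specProj y (Set.Iic (-l)) * R.specProj y (Set.Ici l) = 0 := by
          rw [← R.specProj_inter y _ _ hy measurableSet_Iic measurableSet_Ici]
          have : Set.Iic (-l) ∩ Set.Ici l = ∅ := by
            ext t
            simp only [Set.mem_inter_iff, Set.mem_Iic, Set.mem_Ici, Set.mem_empty_iff_false,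
              iff_false, not_and, not_le]
            intro h; linarith
          rw [this, specProj_empty R hy]
        have hthree := tau_three_orth R hfm hfp hgproj hff hf2 hf1
        have hPU : R.prob y (Set.Iic (-l) ∪ Set.Ici l) =
            (R.τ (R.specProj y (Set.Iic (-l)))).re + (R.τ (R.specProj y (Set.Ici l))).re := by
          refine prob_union R hy measurableSet_Iic measurableSet_Ici ?_
          rw [Set.disjoint_left]
          intro t ht1 ht2
          simp only [Set.mem_Iic] at ht1
          simp only [Set.mem_Ici] at ht2
          linarith
        have htg : (R.τ g).re = (Q.τ c).re * (Q.τ c).re :=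
          tensor_tau_re hts (proj_nonneg hcproj) (proj_nonneg hcproj)
        have htq0 : 0 ≤ Q.prob x (Set.Icc u v) := prob_nonneg Q hx measurableSet_Icc
        have htq1 : Q.prob x (Set.Icc u v) ≤ 1 := prob_le_one Q hx measurableSet_Icc
        have hceq : (Q.τ c).re = Q.prob x (Set.Icc u v) := rfl
        rw [hPU]
        rw [htg, hceq] at hthree
        nlinarith [sq_nonneg (1 - Q.prob x (Set.Icc u v))]
      -- limit
      have hmono : Monotone (fun n : ℕ => Set.Icc (u0 + ee n) (v0 - ee n)) := by
        intro n k hnk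
        have : ee k ≤ ee n := by
          rw [heedef]
          apply div_le_div_of_nonneg_left (by linarith) (by positivity)
          have : (n:ℝ) ≤ k := Nat.cast_le.mpr hnk
          linarith
        apply Set.Icc_subset_Icc <;> linarith
      have hU : (⋃ n, Set.Icc (u0 + ee n) (v0 - ee n)) = Set.Ioo u0 v0 := by
        ext t
        simp only [Set.mem_iUnion, Set.mem_Icc, Set.mem_Ioo]
        constructor
        · rintro ⟨n, h1, h2⟩
          have := hee_pos n
          constructor <;> linarith
        · rintro ⟨h1, h2⟩
          set d := min (t - u0) (v0 - t) with hd
          have hd0 : 0 < d := lt_min (by linarith) (by linarith)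
          obtain ⟨n, hn⟩ := exists_nat_one_div_lt (div_pos hd0 (by linarith : (0:ℝ) < l/2))
          refine ⟨n, ?_, ?_⟩
          · have hlt : ee n < d := by
              rw [heedef]
              have h2' : (l/2) * (1/((n:ℝ)+1)) < (l/2) * (d / (l/2)) :=
                mul_lt_mul_of_pos_left hn (by linarith)
              rw [mul_div_cancel₀ d (by linarith : (l:ℝ)/2 ≠ 0)] at h2'
              calc (l/2) / ((n:ℝ)+1) = (l/2) * (1/((n:ℝ)+1)) := by ring
                _ < d := h2'
            have := min_le_left (t - u0) (v0 - t)
            have := min_le_right (t - u0) (v0 - t)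
            linarith [hlt]
          · have hlt : ee n < d := by
              rw [heedef]
              have h2' : (l/2) * (1/((n:ℝ)+1)) < (l/2) * (d / (l/2)) :=
                mul_lt_mul_of_pos_left hn (by linarith)
              rw [mul_div_cancel₀ d (by linarith : (l:ℝ)/2 ≠ 0)] at h2'
              calc (l/2) / ((n:ℝ)+1) = (l/2) * (1/((n:ℝ)+1)) := by ring
                _ < d := h2'
            have := min_le_left (t - u0) (v0 - t)
            have := min_le_right (t - u0) (v0 - t)
            linarith [hlt]
      have htend := prob_tendsto Q hx _ (fun n => measurableSet_Icc) hmono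
      rw [hU] at htend
      have hlim : R.prob y (Set.Iic (-l) ∪ Set.Ici l) ≤
          2 - 2 * Q.prob x (Set.Ioo u0 v0) := by
        refine ge_of_tendsto' (tendsto_const_nhds.sub (htend.const_mul 2)) key
      have hcompl : Q.prob x (Set.Ioo u0 v0) +
          Q.prob x (Set.Iic u0 ∪ Set.Ici v0) = 1 := by
        refine prob_compl_pair Q hx measurableSet_Ioo
          (measurableSet_Iic.union measurableSet_Ici) ?_ ?_
        · rw [Set.disjoint_left]
          intro t ht1 ht2
          simp only [Set.mem_Ioo] at ht1
          simp only [Set.mem_union, Set.mem_Iic, Set.mem_Ici] at ht2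
          rcases ht2 with h | h <;> linarith [ht1.1, ht1.2]
        · ext t
          simp only [Set.mem_union, Set.mem_Ioo, Set.mem_Iic, Set.mem_Ici, Set.mem_univ,
            iff_true]
          rcases le_or_gt t u0 with h | h
          · exact Or.inr (Or.inl h)
          · rcases lt_or_ge t v0 with h' | h'
            · exact Or.inl ⟨h, h'⟩
            · exact Or.inr (Or.inr h')
      linarith
  -- PART 1
  have hpart1 : Q.prob (qAbs (x - (m : ℂ) • 1)) (Set.Ici l) ≤
      2 * R.prob (qAbs y) (Set.Ici l) := by
    rw [prob_qAbs_shift Q hx m l]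
    rcases le_or_gt l 0 with hl | hl
    · have h1 : Q.prob x (Set.Iic (m - l) ∪ Set.Ici (m + l)) ≤ 1 :=
        prob_le_one Q hx (measurableSet_Iic.union measurableSet_Ici)
      have hset : Set.Iic (-l) ∪ Set.Ici l = Set.univ := by
        ext t
        simp only [Set.mem_union, Set.mem_Iic, Set.mem_Ici, Set.mem_univ, iff_true]
        rcases le_total t l with h | h
        · exact Or.inl (by linarith)
        · exact Or.inr h
      rw [hprob_y, hset, prob_univ R hy]
      linarith
    · rw [hprob_y]
      set Pp := Q.specProj x (Set.Ici (m + l)) with hPp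
      set Pm := Q.specProj x (Set.Iic (m - l)) with hPm
      set Qm := Q.specProj x (Set.Iic m) with hQm
      set Qp := Q.specProj x (Set.Ici m) with hQp
      have hPpp : IsProjection Pp := specProj_isProjection Q hx measurableSet_Ici
      have hPmp : IsProjection Pm := specProj_isProjection Q hx measurableSet_Iic
      have hQmp : IsProjection Qm := specProj_isProjection Q hx measurableSet_Iic
      have hQpp : IsProjection Qp := specProj_isProjection Q hx measurableSet_Ici
      have hxPp : x * Pp = Pp * x := (Q.specProj_commute x _ hx measurableSet_Ici).eq
      have hxPm : x * Pm = Pm * x := (Q.specProj_commute x _ hx measurableSet_Iic).eq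
      have hxQm : x * Qm = Qm * x := (Q.specProj_commute x _ hx measurableSet_Iic).eq
      have hxQp : x * Qp = Qp * x := (Q.specProj_commute x _ hx measurableSet_Ici).eq
      -- corner bounds in M
      have h1 : ((m + l : ℝ) : ℂ) • Pp ≤ x * Pp := specProj_Ici_smul_le Q hx (m + l)
      have h2 : x * Qm ≤ (m : ℂ) • Qm := x_mul_specProj_Iic_le Q hx m
      have h3 : x * Pm ≤ ((m - l : ℝ) : ℂ) • Pm := x_mul_specProj_Iic_le Q hx (m - l)
      have h4 : (m : ℂ) • Qp ≤ x * Qp := specProj_Ici_smul_le Q hx m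
      -- the projections r⁺ and r⁻
      set rp := i1 Pp * i2 Qm with hrp
      set rm := i1 Pm * i2 Qp with hrm
      have hrpp : IsProjection rp := tensor_isProjection hts hPpp hQmp
      have hrmp : IsProjection rm := tensor_isProjection hts hPmp hQpp
      have hcyrp : y * rp = rp * y := (commute_y_tensor hts hxPp hxQm).eq
      have hcyrm : y * rm = rm * y := (commute_y_tensor hts hxPm hxQp).eq
      -- operator bounds in N
      have bp1 : ((m + l : ℝ) : ℂ) • rp ≤ i1 x * rp :=
        tensor_bound_fst hts hPpp hQmp hxPp h1
      have bp2 : i2 x * rp ≤ ((m : ℝ) : ℂ) • rp :=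
        tensor_bound_snd' hts hPpp hQmp hxQm h2
      have bm1 : i1 x * rm ≤ ((m - l : ℝ) : ℂ) • rm :=
        tensor_bound_fst' hts hPmp hQpp hxPm h3
      have bm2 : ((m : ℝ) : ℂ) • rm ≤ i2 x * rm :=
        tensor_bound_snd hts hPmp hQpp hxQp h4
      have hyrp : ((l : ℝ) : ℂ) • rp ≤ y * rp := by
        have := sub_le_smul_sub bp1 bp2
        rw [hydef, sub_mul]
        have harith : ((m + l - m : ℝ) : ℂ) = ((l : ℝ) : ℂ) := by norm_num
        rwa [harith] at this
      have hyrm : y * rm ≤ ((-l : ℝ) : ℂ) • rm := by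
        have := smul_sub_le_sub bm1 bm2
        rw [hydef, sub_mul]
        have harith : ((m - l - m : ℝ) : ℂ) = ((-l : ℝ) : ℂ) := by norm_num
        rwa [harith] at this
      -- trace bounds
      have hp_bound : (R.τ rp).re ≤ R.prob y (Set.Ici l) :=
        tau_le_prob_Ici R hy hrpp hcyrp hyrp
      have hm_bound : (R.τ rm).re ≤ R.prob y (Set.Iic (-l)) :=
        tau_le_prob_Iic R hy hrmp hcyrm hyrm
      -- trace values
      have htrp : (R.τ rp).re = (Q.τ Pp).re * (Q.τ Qm).re :=
        tensor_tau_re hts (proj_nonneg hPpp) (proj_nonneg hQmp)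
      have htrm : (R.τ rm).re = (Q.τ Pm).re * (Q.τ Qp).re :=
        tensor_tau_re hts (proj_nonneg hPmp) (proj_nonneg hQpp)
      -- medians
      have hmed1 : 1/2 ≤ (Q.τ Qm).re := hm.1
      have hmed2 : 1/2 ≤ (Q.τ Qp).re := hm.2
      have hPp0 : 0 ≤ (Q.τ Pp).re := tau_re_nonneg Q (proj_nonneg hPpp)
      have hPm0 : 0 ≤ (Q.τ Pm).re := tau_re_nonneg Q (proj_nonneg hPmp)
      -- probability split
      have hsplit : Q.prob x (Set.Iic (m - l) ∪ Set.Ici (m + l)) =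
          Q.prob x (Set.Iic (m - l)) + Q.prob x (Set.Ici (m + l)) := by
        refine prob_union Q hx measurableSet_Iic measurableSet_Ici ?_
        rw [Set.disjoint_left]
        intro t ht1 ht2
        simp only [Set.mem_Iic] at ht1
        simp only [Set.mem_Ici] at ht2
        linarith
      have hsplit2 : R.prob y (Set.Iic (-l) ∪ Set.Ici l) =
          R.prob y (Set.Iic (-l)) + R.prob y (Set.Ici l) := by
        refine prob_union R hy measurableSet_Iic measurableSet_Ici ?_
        rw [Set.disjoint_left]
        intro t ht1 ht2
        simp only [Set.mem_Iic] at ht1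
        simp only [Set.mem_Ici] at ht2
        linarith
      have hvIci : Q.prob x (Set.Ici (m + l)) = (Q.τ Pp).re := rfl
      have hvIic : Q.prob x (Set.Iic (m - l)) = (Q.τ Pm).re := rfl
      rw [hsplit, hsplit2, hvIci, hvIic]
      nlinarith [hp_bound, hm_bound, htrp, htrm]
  refine ⟨hpart1, fun a => by linarith [hpart2 a], by linarith [hpart2 m]⟩
end
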